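/- arXiv:2501.04021 — 6 statements merged into one kernel-verified Lean document; each statement's English description precedes it below -/
import Mathlib

section
/- If θ_e is itself the minimum angle of triangle T (with maximum angle θ_M), then both edges adjacent to θ_e have length at least |e|, the area satisfies |T| ≥ sin(θ_M)|e|²/2, and consequently for every affine function w on T with e having endpoints x₁,x₂, |w(x₂) - w(x₁)| ≤ |e| |∇w| ≤ √(2/ sin θ_M) ‖∇w‖_{L²(T)}. -/
open EuclideanGeometry Real MeasureTheory
open scoped RealInnerProductSpace Pointwise

noncomputable def triArea (A B C : EuclideanSpace ℝ (Fin 2)) : ℝ :=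
  (MeasureTheory.volume (convexHull ℝ ({A, B, C} : Set (EuclideanSpace ℝ (Fin 2))))).toReal

lemma vol_tri_prod : volume {q : ℝ × ℝ | 0 ≤ q.1 ∧ 0 ≤ q.2 ∧ q.1 + q.2 ≤ 1}
    = ENNReal.ofReal (1/2) := by
  have hs : MeasurableSet {q : ℝ × ℝ | 0 ≤ q.1 ∧ 0 ≤ q.2 ∧ q.1 + q.2 ≤ 1} := by
    apply MeasurableSet.inter
    · exact measurableSet_le measurable_const measurable_fst
    apply MeasurableSet.inter
    · exact measurableSet_le measurable_const measurable_snd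
    · exact measurableSet_le (measurable_fst.add measurable_snd) measurable_const
  rw [Measure.volume_eq_prod, Measure.prod_apply hs]
  have hslice : ∀ x : ℝ, (volume (Prod.mk x ⁻¹' {q : ℝ × ℝ | 0 ≤ q.1 ∧ 0 ≤ q.2 ∧ q.1 + q.2 ≤ 1}))
      = Set.indicator (Set.Icc (0:ℝ) 1) (fun x => ENNReal.ofReal (1 - x)) x := by
    intro x
    have : (Prod.mk x ⁻¹' {q : ℝ × ℝ | 0 ≤ q.1 ∧ 0 ≤ q.2 ∧ q.1 + q.2 ≤ 1})
        = if 0 ≤ x then Set.Icc 0 (1 - x) else ∅ := by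
      ext y
      by_cases hx : 0 ≤ x <;>
        simp only [Set.mem_preimage, Set.mem_setOf_eq, hx, if_true, if_false, Set.mem_Icc,
          Set.mem_empty_iff_false, iff_false, not_and, true_and, false_and] <;>
      · first
        | (constructor
           · rintro ⟨h1, h2⟩; exact ⟨h1, by linarith⟩
           · rintro ⟨h1, h2⟩; exact ⟨h1, by linarith⟩)
        | (intro h; exact absurd h hx)
    rw [this]
    by_cases hx : 0 ≤ x
    · by_cases hx1 : x ≤ 1
      · rw [if_pos hx, Set.indicator_of_mem (Set.mem_Icc.2 ⟨hx, hx1⟩), Real.volume_Icc]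
        norm_num
      · rw [if_pos hx, Set.indicator_of_notMem (by simp [Set.mem_Icc, hx1]),
          Set.Icc_eq_empty (by linarith), measure_empty]
    · rw [if_neg hx, Set.indicator_of_notMem (by simp [Set.mem_Icc, hx]), measure_empty]
  simp_rw [hslice]
  rw [lintegral_indicator measurableSet_Icc _]
  rw [← ofReal_integral_eq_lintegral_ofReal]
  · rw [integral_Icc_eq_integral_Ioc, ← intervalIntegral.integral_of_le (by norm_num : (0:ℝ) ≤ 1)]
    have : ∫ x in (0:ℝ)..1, (1 - x) = 1/2 := by
      rw [intervalIntegral.integral_sub intervalIntegrable_const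
        intervalIntegral.intervalIntegrable_id]
      simp [integral_id]
      norm_num
    rw [this]
  · exact (continuous_const.sub continuous_id).integrableOn_Icc
  · exact (ae_restrict_of_forall_mem measurableSet_Icc (fun x hx => by
      simp only [Pi.zero_apply]; linarith [hx.2]))

lemma meas_tri_pi : MeasurableSet {p : Fin 2 → ℝ | 0 ≤ p 0 ∧ 0 ≤ p 1 ∧ p 0 + p 1 ≤ 1} := by
  apply MeasurableSet.inter
  · exact measurableSet_le measurable_const (measurable_pi_apply 0)
  apply MeasurableSet.inter
  · exact measurableSet_le measurable_const (measurable_pi_apply 1)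
  · exact measurableSet_le ((measurable_pi_apply 0).add (measurable_pi_apply 1)) measurable_const

lemma vol_tri_E : volume {x : EuclideanSpace ℝ (Fin 2) | 0 ≤ x 0 ∧ 0 ≤ x 1 ∧ x 0 + x 1 ≤ 1}
    = ENNReal.ofReal (1/2) := by
  have h1 := (EuclideanSpace.volume_preserving_symm_measurableEquiv_toLp (Fin 2)).measure_preimage
    (s := {p : Fin 2 → ℝ | 0 ≤ p 0 ∧ 0 ≤ p 1 ∧ p 0 + p 1 ≤ 1}) meas_tri_pi.nullMeasurableSet
  have hms : MeasurableSet {q : ℝ × ℝ | 0 ≤ q.1 ∧ 0 ≤ q.2 ∧ q.1 + q.2 ≤ 1} := by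
    apply MeasurableSet.inter
    · exact measurableSet_le measurable_const measurable_fst
    apply MeasurableSet.inter
    · exact measurableSet_le measurable_const measurable_snd
    · exact measurableSet_le (measurable_fst.add measurable_snd) measurable_const
  have h2 := (volume_preserving_finTwoArrow ℝ).measure_preimage
    (s := {q : ℝ × ℝ | 0 ≤ q.1 ∧ 0 ≤ q.2 ∧ q.1 + q.2 ≤ 1}) hms.nullMeasurableSet
  have e1 : (MeasurableEquiv.toLp 2 (Fin 2 → ℝ)).symm ⁻¹'
        {p : Fin 2 → ℝ | 0 ≤ p 0 ∧ 0 ≤ p 1 ∧ p 0 + p 1 ≤ 1}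
      = {x : EuclideanSpace ℝ (Fin 2) | 0 ≤ x 0 ∧ 0 ≤ x 1 ∧ x 0 + x 1 ≤ 1} := rfl
  have e2 : (MeasurableEquiv.finTwoArrow : (Fin 2 → ℝ) ≃ᵐ ℝ × ℝ) ⁻¹'
        {q : ℝ × ℝ | 0 ≤ q.1 ∧ 0 ≤ q.2 ∧ q.1 + q.2 ≤ 1}
      = {p : Fin 2 → ℝ | 0 ≤ p 0 ∧ 0 ≤ p 1 ∧ p 0 + p 1 ≤ 1} := rfl
  rw [e1] at h1
  rw [e2] at h2
  rw [h1, h2, vol_tri_prod]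

lemma hull_base :
    convexHull ℝ ({0, EuclideanSpace.single (0 : Fin 2) (1:ℝ),
        EuclideanSpace.single (1 : Fin 2) (1:ℝ)} : Set (EuclideanSpace ℝ (Fin 2)))
      = {x : EuclideanSpace ℝ (Fin 2) | 0 ≤ x 0 ∧ 0 ≤ x 1 ∧ x 0 + x 1 ≤ 1} := by
  apply le_antisymm
  · apply convexHull_min
    · rintro x (rfl | rfl | rfl) <;>
        simp [EuclideanSpace.single_apply]
    · intro x hx y hy a b ha hb hab
      obtain ⟨hx0, hx1, hxs⟩ := hx
      obtain ⟨hy0, hy1, hys⟩ := hy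
      have e0 : (a • x + b • y) 0 = a * x 0 + b * y 0 := rfl
      have e1 : (a • x + b • y) 1 = a * x 1 + b * y 1 := rfl
      refine ⟨?_, ?_, ?_⟩
      · rw [e0]; positivity
      · rw [e1]; positivity
      · rw [e0, e1]; nlinarith
  · intro x hx
    obtain ⟨h0, h1, hs⟩ := hx
    have := Finset.centerMass_mem_convexHull
      (s := ({0, EuclideanSpace.single (0:Fin 2) (1:ℝ),
        EuclideanSpace.single (1:Fin 2) (1:ℝ)} : Set (EuclideanSpace ℝ (Fin 2))))
      (Finset.univ : Finset (Fin 3))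
      (w := ![1 - x 0 - x 1, x 0, x 1])
      (z := ![0, EuclideanSpace.single (0:Fin 2) (1:ℝ), EuclideanSpace.single (1:Fin 2) (1:ℝ)])
      (by intro i _; fin_cases i <;> simp <;> linarith)
      (by simp [Fin.sum_univ_three]; ring_nf; norm_num)
      (by intro i _; fin_cases i <;> simp)
    convert this using 1
    rw [Finset.centerMass]
    have hsum : (∑ i, (![1 - x 0 - x 1, x 0, x 1]) i) = 1 := by
      simp [Fin.sum_univ_three]; ring
    rw [hsum]
    simp only [Fin.sum_univ_three, inv_one, one_smul]
    ext i
    fin_cases i <;>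
      simp [EuclideanSpace.single_apply, PiLp.add_apply, PiLp.smul_apply, smul_eq_mul]

lemma sin_angle_vec (u v : EuclideanSpace ℝ (Fin 2)) :
    Real.sin (InnerProductGeometry.angle u v) * (‖u‖ * ‖v‖) = |u 0 * v 1 - u 1 * v 0| := by
  rw [InnerProductGeometry.sin_angle_mul_norm_mul_norm]
  have h : ⟪u, u⟫ * ⟪v, v⟫ - ⟪u, v⟫ * ⟪u, v⟫ = (u 0 * v 1 - u 1 * v 0)^2 := by
    simp only [PiLp.inner_apply, RCLike.inner_apply, Fin.sum_univ_two, conj_trivial]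
    ring
  rw [h, Real.sqrt_sq_eq_abs]

lemma area_formula (A B C : EuclideanSpace ℝ (Fin 2)) :
    triArea A B C = Real.sin (∠ B A C) * (dist A B * dist A C) / 2 := by
  set u := B - A with hu
  set v := C - A with hv
  set M : Matrix (Fin 2) (Fin 2) ℝ := !![u 0, v 0; u 1, v 1] with hM
  set f := Matrix.toEuclideanLin M with hf
  have hfap : ∀ x : EuclideanSpace ℝ (Fin 2), ∀ i, f x i = M i 0 * x 0 + M i 1 * x 1 := by
    intro x i
    simp [hf, Matrix.toEuclideanLin_apply, Matrix.mulVec, dotProduct, Fin.sum_univ_two]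
    fin_cases i <;> rfl
  have hf0 : f (EuclideanSpace.single (0:Fin 2) (1:ℝ)) = u := by
    ext i; rw [hfap]; fin_cases i <;> simp [EuclideanSpace.single_apply, hM]
  have hf1 : f (EuclideanSpace.single (1:Fin 2) (1:ℝ)) = v := by
    ext i; rw [hfap]; fin_cases i <;> simp [EuclideanSpace.single_apply, hM]
  have hset : ({A, B, C} : Set (EuclideanSpace ℝ (Fin 2)))
      = A +ᵥ (⇑f '' {0, EuclideanSpace.single (0:Fin 2) (1:ℝ),
          EuclideanSpace.single (1:Fin 2) (1:ℝ)}) := by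
    rw [Set.image_insert_eq, Set.image_insert_eq, Set.image_singleton, hf0, hf1, map_zero]
    rw [Set.vadd_set_insert, Set.vadd_set_insert, Set.vadd_set_singleton]
    simp [hu, hv]
  have hdet : LinearMap.det (f : EuclideanSpace ℝ (Fin 2) →ₗ[ℝ] EuclideanSpace ℝ (Fin 2))
      = u 0 * v 1 - u 1 * v 0 := by
    have : (f : EuclideanSpace ℝ (Fin 2) →ₗ[ℝ] EuclideanSpace ℝ (Fin 2))
        = Matrix.toLin (PiLp.basisFun 2 ℝ (Fin 2)) (PiLp.basisFun 2 ℝ (Fin 2)) M := rfl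
    rw [this, LinearMap.det_toLin, hM, Matrix.det_fin_two_of]
    ring
  have hvol : volume (convexHull ℝ ({A, B, C} : Set (EuclideanSpace ℝ (Fin 2))))
      = ENNReal.ofReal (|u 0 * v 1 - u 1 * v 0| / 2) := by
    rw [hset, convexHull_vadd, measure_vadd, ← LinearMap.image_convexHull, hull_base,
      Measure.addHaar_image_linearMap, hdet, vol_tri_E, ← ENNReal.ofReal_mul (abs_nonneg _),
      mul_one_div]
  have hBA : ∠ B A C = InnerProductGeometry.angle u v := rfl
  have hnu : dist A B = ‖u‖ := by rw [dist_eq_norm, hu, norm_sub_rev]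
  have hnv : dist A C = ‖v‖ := by rw [dist_eq_norm, hv, norm_sub_rev]
  rw [triArea, hvol, hBA, hnu, hnv, ENNReal.toReal_ofReal (by positivity),
    ← sin_angle_vec u v]

lemma triArea_perm₂ (A B C : EuclideanSpace ℝ (Fin 2)) : triArea A B C = triArea B A C := by
  unfold triArea
  rw [Set.insert_comm]

lemma triArea_perm₃ (A B C : EuclideanSpace ℝ (Fin 2)) : triArea A B C = triArea C A B := by
  unfold triArea
  have : ({A, B, C} : Set (EuclideanSpace ℝ (Fin 2))) = {C, A, B} := by
    ext x; simp; tauto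
  rw [this]

lemma sin_le_sin_aux {a b : ℝ} (ha : 0 ≤ a) (hab : a ≤ b) (hs : a + b ≤ π) :
    Real.sin a ≤ Real.sin b := by
  have hpi := Real.pi_pos
  rcases le_total b (π/2) with h | h
  · exact Real.strictMonoOn_sin.monotoneOn ⟨by linarith, by linarith⟩ ⟨by linarith, h⟩ hab
  · rw [← Real.sin_pi_sub b]
    exact Real.strictMonoOn_sin.monotoneOn ⟨by linarith, by linarith⟩
      ⟨by linarith, by linarith⟩ (by linarith)

set_option maxHeartbeats 1000000 in
/-- if the angle `θe = ∠ x₁ x₃ x₂` opposite the edge `e = x₁x₂` is itself the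
minimum angle of the triangle with maximum angle `θM`, then both edges adjacent to `θe`
have length at least `|e|`, the area satisfies `|T| ≥ sin(θM)|e|²/2`, and for every affine
`w` with gradient `g`,
`|w x₂ - w x₁| ≤ |e|·|∇w| ≤ √(2/sin θM)·‖∇w‖_{L²(T)}` where `‖∇w‖_{L²(T)} = |T|^{1/2}‖g‖`. -/
theorem stmt1
    (x₁ x₂ x₃ : EuclideanSpace ℝ (Fin 2))
    (hnd : AffineIndependent ℝ ![x₁, x₂, x₃])
    (θM : ℝ)
    (hθM : θM = max (∠ x₂ x₁ x₃) (max (∠ x₁ x₂ x₃) (∠ x₁ x₃ x₂)))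
    (hmin₁ : ∠ x₁ x₃ x₂ ≤ ∠ x₂ x₁ x₃)
    (hmin₂ : ∠ x₁ x₃ x₂ ≤ ∠ x₁ x₂ x₃)
    (g : EuclideanSpace ℝ (Fin 2)) (c : ℝ)
    (w : EuclideanSpace ℝ (Fin 2) → ℝ)
    (hw : ∀ x, w x = ⟪g, x⟫ + c) :
    dist x₁ x₂ ≤ dist x₃ x₁ ∧
    dist x₁ x₂ ≤ dist x₃ x₂ ∧
    Real.sin θM * dist x₁ x₂ ^ 2 / 2 ≤ triArea x₁ x₂ x₃ ∧
    |w x₂ - w x₁| ≤ dist x₁ x₂ * ‖g‖ ∧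
    dist x₁ x₂ * ‖g‖ ≤ Real.sqrt (2 / Real.sin θM) * (Real.sqrt (triArea x₁ x₂ x₃) * ‖g‖) := by
  have hncol : ¬ Collinear ℝ ({x₁, x₂, x₃} : Set (EuclideanSpace ℝ (Fin 2))) := by
    rw [← affineIndependent_iff_not_collinear_set]
    exact hnd
  have hncol₂ : ¬ Collinear ℝ ({x₂, x₁, x₃} : Set (EuclideanSpace ℝ (Fin 2))) := by
    rwa [Set.insert_comm]
  have hncol₃ : ¬ Collinear ℝ ({x₁, x₃, x₂} : Set (EuclideanSpace ℝ (Fin 2))) := by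
    rwa [Set.pair_comm x₃ x₂]
  have hs₁ : 0 < Real.sin (∠ x₂ x₁ x₃) := EuclideanGeometry.sin_pos_of_not_collinear hncol₂
  have hs₂ : 0 < Real.sin (∠ x₁ x₂ x₃) := EuclideanGeometry.sin_pos_of_not_collinear hncol
  have hs₃ : 0 < Real.sin (∠ x₁ x₃ x₂) := EuclideanGeometry.sin_pos_of_not_collinear hncol₃
  have ha₁p : 0 < ∠ x₂ x₁ x₃ := EuclideanGeometry.angle_pos_of_not_collinear hncol₂
  have ha₂p : 0 < ∠ x₁ x₂ x₃ := EuclideanGeometry.angle_pos_of_not_collinear hncol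
  have ha₃p : 0 < ∠ x₁ x₃ x₂ := EuclideanGeometry.angle_pos_of_not_collinear hncol₃
  have h21 : x₂ ≠ x₁ := by
    have := hnd.injective.ne (show (1 : Fin 3) ≠ 0 by decide); simpa using this
  have h31 : x₃ ≠ x₁ := by
    have := hnd.injective.ne (show (2 : Fin 3) ≠ 0 by decide); simpa using this
  have h32 : x₃ ≠ x₂ := by
    have := hnd.injective.ne (show (2 : Fin 3) ≠ 1 by decide); simpa using this
  have hsum : ∠ x₁ x₂ x₃ + ∠ x₁ x₃ x₂ + ∠ x₂ x₁ x₃ = π := by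
    have := EuclideanGeometry.angle_add_angle_add_angle_eq_pi (p₁ := x₁) x₃ h21
    rwa [EuclideanGeometry.angle_comm x₂ x₃ x₁, EuclideanGeometry.angle_comm x₃ x₁ x₂] at this
  have h₁ : triArea x₁ x₂ x₃ = Real.sin (∠ x₂ x₁ x₃) * (dist x₁ x₂ * dist x₁ x₃) / 2 :=
    area_formula x₁ x₂ x₃
  have h₂ : triArea x₁ x₂ x₃ = Real.sin (∠ x₁ x₂ x₃) * (dist x₂ x₁ * dist x₂ x₃) / 2 := by
    rw [triArea_perm₂]; exact area_formula x₂ x₁ x₃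
  have h₃ : triArea x₁ x₂ x₃ = Real.sin (∠ x₁ x₃ x₂) * (dist x₃ x₁ * dist x₃ x₂) / 2 := by
    rw [triArea_perm₃]; exact area_formula x₃ x₁ x₂
  have d12pos : 0 < dist x₁ x₂ := dist_pos.2 (fun h => h21 h.symm)
  have d31pos : 0 < dist x₃ x₁ := dist_pos.2 h31
  have d32pos : 0 < dist x₃ x₂ := dist_pos.2 h32
  have hd21 : dist x₂ x₁ = dist x₁ x₂ := dist_comm _ _
  have hd23 : dist x₂ x₃ = dist x₃ x₂ := dist_comm _ _
  have hd13 : dist x₁ x₃ = dist x₃ x₁ := dist_comm _ _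
  have h₁' : triArea x₁ x₂ x₃ = Real.sin (∠ x₂ x₁ x₃) * (dist x₁ x₂ * dist x₃ x₁) / 2 := by
    rw [h₁, hd13]
  have h₂' : triArea x₁ x₂ x₃ = Real.sin (∠ x₁ x₂ x₃) * (dist x₁ x₂ * dist x₃ x₂) / 2 := by
    rw [h₂, hd21, hd23]
  -- claim 1
  have hsin32 : Real.sin (∠ x₁ x₃ x₂) ≤ Real.sin (∠ x₁ x₂ x₃) :=
    sin_le_sin_aux (le_of_lt ha₃p) hmin₂ (by linarith)
  have heq23 : Real.sin (∠ x₁ x₂ x₃) * (dist x₁ x₂ * dist x₃ x₂)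
      = Real.sin (∠ x₁ x₃ x₂) * (dist x₃ x₁ * dist x₃ x₂) := by
    linarith [h₂'.symm.trans h₃]
  have claim1 : dist x₁ x₂ ≤ dist x₃ x₁ := by
    nlinarith [mul_nonneg (mul_nonneg (sub_nonneg.2 hsin32) d31pos.le) d32pos.le,
      mul_pos hs₂ d32pos]
  -- claim 2
  have hsin31 : Real.sin (∠ x₁ x₃ x₂) ≤ Real.sin (∠ x₂ x₁ x₃) :=
    sin_le_sin_aux (le_of_lt ha₃p) hmin₁ (by linarith)
  have heq13 : Real.sin (∠ x₂ x₁ x₃) * (dist x₁ x₂ * dist x₃ x₁)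
      = Real.sin (∠ x₁ x₃ x₂) * (dist x₃ x₁ * dist x₃ x₂) := by
    linarith [h₁'.symm.trans h₃]
  have claim2 : dist x₁ x₂ ≤ dist x₃ x₂ := by
    nlinarith [mul_nonneg (mul_nonneg (sub_nonneg.2 hsin31) d32pos.le) d31pos.le,
      mul_pos hs₁ d31pos]
  -- θM is one of the three angles
  have hM3 : θM = ∠ x₂ x₁ x₃ ∨ θM = ∠ x₁ x₂ x₃ ∨ θM = ∠ x₁ x₃ x₂ := by
    rcases max_choice (∠ x₂ x₁ x₃) (max (∠ x₁ x₂ x₃) (∠ x₁ x₃ x₂)) with h | h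
    · left; rw [hθM, h]
    · rcases max_choice (∠ x₁ x₂ x₃) (∠ x₁ x₃ x₂) with h' | h'
      · right; left; rw [hθM, h, h']
      · right; right; rw [hθM, h, h']
  have hsMpos : 0 < Real.sin θM := by
    rcases hM3 with h | h | h <;> rw [h] <;> assumption
  -- claim 3
  have claim3 : Real.sin θM * dist x₁ x₂ ^ 2 / 2 ≤ triArea x₁ x₂ x₃ := by
    rcases hM3 with h | h | h
    · rw [h, h₁']
      nlinarith [mul_nonneg hs₁.le (mul_nonneg d12pos.le (sub_nonneg.2 claim1))]
    · rw [h, h₂']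
      nlinarith [mul_nonneg hs₂.le (mul_nonneg d12pos.le (sub_nonneg.2 claim2))]
    · rw [h, h₃]
      nlinarith [mul_nonneg hs₃.le (mul_nonneg (sub_nonneg.2 claim1) d32pos.le),
        mul_nonneg hs₃.le (mul_nonneg d12pos.le (sub_nonneg.2 claim2))]
  refine ⟨claim1, claim2, claim3, ?_, ?_⟩
  · have : w x₂ - w x₁ = ⟪g, x₂ - x₁⟫ := by
      rw [hw, hw, inner_sub_right]; ring
    rw [this]
    calc |⟪g, x₂ - x₁⟫| ≤ ‖g‖ * ‖x₂ - x₁‖ := abs_real_inner_le_norm g (x₂ - x₁)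
      _ = dist x₁ x₂ * ‖g‖ := by rw [dist_eq_norm, norm_sub_rev]; ring
  · have hAnn : 0 ≤ triArea x₁ x₂ x₃ := ENNReal.toReal_nonneg
    have h5 : dist x₁ x₂ ≤ Real.sqrt (2 / Real.sin θM) * Real.sqrt (triArea x₁ x₂ x₃) := by
      rw [← Real.sqrt_mul (by positivity),
        Real.le_sqrt dist_nonneg (mul_nonneg (div_nonneg two_pos.le hsMpos.le) hAnn)]
      rw [div_mul_eq_mul_div, le_div_iff₀ hsMpos]
      nlinarith
    calc dist x₁ x₂ * ‖g‖
        ≤ (Real.sqrt (2 / Real.sin θM) * Real.sqrt (triArea x₁ x₂ x₃)) * ‖g‖ :=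
          mul_le_mul_of_nonneg_right h5 (norm_nonneg g)
      _ = Real.sqrt (2 / Real.sin θM) * (Real.sqrt (triArea x₁ x₂ x₃) * ‖g‖) := by ring
end

section
/- (Trace inequality on anisotropic elements with inscribed ball) Let K ⊂ ℝ³ be a polyhedron with diameter h_K containing a ball of radius ≥ λ h_K for some λ ∈ (0,1), and with |F_K| faces. Then for every affine function v on K, ‖v‖_{L²(∂K)} ≤ 16 λ^{-3} √(|F_K|/3) h_K^{-1/2} ‖v‖_{L²(K)}. -/
open MeasureTheory
open scoped RealInnerProductSpace ENNReal NNReal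

lemma ball_area2 {m : ℕ} (hm : m = 2) (r : ℝ) (hr : 0 ≤ r) :
    μH[2] (Metric.closedBall (0 : EuclideanSpace ℝ (Fin m)) r) ≤ ENNReal.ofReal (8 * r ^ 2) := by
  subst hm
  set k : (Fin 2 → ℝ) → EuclideanSpace ℝ (Fin 2) := ⇑(EuclideanSpace.equiv (Fin 2) ℝ).symm with hk
  have hlip : LipschitzWith (Real.sqrt 2).toNNReal k := by
    apply LipschitzWith.of_dist_le_mul
    intro x y
    rw [Real.coe_toNNReal _ (Real.sqrt_nonneg 2)]
    have h1 : dist (k x) (k y) = Real.sqrt (∑ i, dist (x i) (y i) ^ 2) := by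
      rw [EuclideanSpace.dist_eq]
      rfl
    rw [h1]
    have h2 : ∑ i : Fin 2, dist (x i) (y i) ^ 2 ≤ 2 * dist x y ^ 2 := by
      have : ∀ i : Fin 2, dist (x i) (y i) ^ 2 ≤ dist x y ^ 2 := fun i =>
        pow_le_pow_left₀ dist_nonneg (dist_le_pi_dist x y i) 2
      calc ∑ i : Fin 2, dist (x i) (y i) ^ 2 ≤ ∑ _i : Fin 2, dist x y ^ 2 :=
            Finset.sum_le_sum fun i _ => this i
        _ = 2 * dist x y ^ 2 := by simp [Finset.sum_const]
    calc Real.sqrt (∑ i, dist (x i) (y i) ^ 2) ≤ Real.sqrt (2 * dist x y ^ 2) :=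
          Real.sqrt_le_sqrt h2
      _ = Real.sqrt 2 * dist x y := by
          rw [Real.sqrt_mul (by norm_num), Real.sqrt_sq dist_nonneg]
  have hsub : Metric.closedBall (0 : EuclideanSpace ℝ (Fin 2)) r ⊆
      k '' (Metric.closedBall (0 : Fin 2 → ℝ) r) := by
    intro x hx
    refine ⟨EuclideanSpace.equiv (Fin 2) ℝ x, ?_, rfl⟩
    rw [Metric.mem_closedBall, dist_zero_right] at hx ⊢
    have : ∀ i, |x i| ≤ ‖x‖ := by
      intro i
      rw [EuclideanSpace.norm_eq]
      rw [← Real.sqrt_sq (abs_nonneg (x i))]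
      apply Real.sqrt_le_sqrt
      rw [sq_abs]
      calc x i ^ 2 ≤ ∑ j, x j ^ 2 :=
        Finset.single_le_sum (f := fun j => x j ^ 2) (fun j _ => sq_nonneg _) (Finset.mem_univ i)
        _ = ∑ j, ‖x j‖ ^ 2 := by simp [Real.norm_eq_abs, sq_abs]
    apply pi_norm_le_iff_of_nonneg (le_trans (norm_nonneg x) hx) |>.2
    intro i
    exact le_trans (by simpa [Real.norm_eq_abs] using this i) hx
  calc μH[2] (Metric.closedBall (0 : EuclideanSpace ℝ (Fin 2)) r)
      ≤ μH[2] (k '' (Metric.closedBall (0 : Fin 2 → ℝ) r)) := measure_mono hsub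
    _ ≤ ((Real.sqrt 2).toNNReal : ℝ≥0∞) ^ (2:ℝ) * μH[2] (Metric.closedBall (0 : Fin 2 → ℝ) r) :=
        hlip.hausdorffMeasure_image_le (by norm_num) _
    _ ≤ ENNReal.ofReal (8 * r ^ 2) := by
        have hcard : (μH[2] : Measure (Fin 2 → ℝ)) = volume := by
          have := hausdorffMeasure_pi_real (ι := Fin 2)
          simpa using this
        rw [hcard, Real.volume_pi_closedBall _ hr]
        have hc : ((Real.sqrt 2).toNNReal : ℝ≥0∞) ^ (2:ℝ) = ENNReal.ofReal 2 := by
          have e1 : ((Real.sqrt 2).toNNReal : ℝ≥0∞) ^ (2:ℝ) = ((Real.sqrt 2).toNNReal : ℝ≥0∞) ^ (2:ℕ) := by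
            rw [← ENNReal.rpow_natCast]; norm_num
          rw [e1]
          rw [show ((Real.sqrt 2).toNNReal : ℝ≥0∞) = ENNReal.ofReal (Real.sqrt 2) from rfl]
          rw [sq, ← ENNReal.ofReal_mul (Real.sqrt_nonneg 2), Real.mul_self_sqrt (by norm_num)]
        rw [hc, ← ENNReal.ofReal_mul (by norm_num)]
        apply ENNReal.ofReal_le_ofReal
        norm_num
        nlinarith

lemma face_area (S : Set (EuclideanSpace ℝ (Fin 3))) (n : EuclideanSpace ℝ (Fin 3)) (d : ℝ)
    (hn : n ≠ 0) (hS : S ⊆ {x | ⟪n, x⟫ = d}) (r : ℝ) (hr : 0 ≤ r)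
    (hSb : ∀ x ∈ S, ∀ y ∈ S, dist x y ≤ r) :
    μH[2] S ≤ ENNReal.ofReal (8 * r ^ 2) := by
  rcases S.eq_empty_or_nonempty with hE | ⟨p, hp⟩
  · simp [hE]
  set W := (ℝ ∙ n)ᗮ with hWdef
  have hW : Module.finrank ℝ W = 2 := by
    have h1 := Submodule.finrank_add_finrank_orthogonal (K := ℝ ∙ n)
    rw [finrank_span_singleton hn] at h1
    have h2 : Module.finrank ℝ (EuclideanSpace ℝ (Fin 3)) = 3 := finrank_euclideanSpace_fin
    rw [h2, ← hWdef] at h1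
    omega
  set b := stdOrthonormalBasis ℝ W with hb
  set L : EuclideanSpace ℝ (Fin (Module.finrank ℝ W)) → EuclideanSpace ℝ (Fin 3) :=
    fun y => p + ((b.repr.symm y : W) : EuclideanSpace ℝ (Fin 3)) with hL
  have hiso : Isometry L := by
    apply Isometry.of_dist_eq
    intro y₁ y₂
    have : L y₁ - L y₂ = ((b.repr.symm y₁ - b.repr.symm y₂ : W) : EuclideanSpace ℝ (Fin 3)) := by
      simp [hL]
    rw [dist_eq_norm, this]
    rw [show (b.repr.symm y₁ - b.repr.symm y₂ : W) = b.repr.symm (y₁ - y₂) by rw [map_sub]]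
    rw [Submodule.norm_coe, LinearIsometryEquiv.norm_map, ← dist_eq_norm]
  have hrange : S ⊆ Set.range L := by
    intro x hx
    have hmem : x - p ∈ W := by
      rw [hWdef, Submodule.mem_orthogonal_singleton_iff_inner_right]
      rw [inner_sub_right]
      have h1 : ⟪n, x⟫ = d := hS hx
      have h2 : ⟪n, p⟫ = d := hS hp
      rw [h1, h2, sub_self]
    refine ⟨b.repr ⟨x - p, hmem⟩, ?_⟩
    simp [hL]
  set T := L ⁻¹' S with hT
  have hTS : L '' T = S := Set.image_preimage_eq_of_subset hrange
  have hTball : T ⊆ Metric.closedBall 0 r := by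
    intro y hy
    rw [Metric.mem_closedBall]
    have hL0 : L 0 = p := by simp [hL]
    calc dist y 0 = dist (L y) (L 0) := (hiso.dist_eq y 0).symm
      _ = dist (L y) p := by rw [hL0]
      _ ≤ r := hSb _ hy _ hp
  calc μH[2] S = μH[2] (L '' T) := by rw [hTS]
    _ ≤ (1 : ℝ≥0∞) ^ (2:ℝ) * μH[2] T := by
        simpa using hiso.lipschitz.hausdorffMeasure_image_le (by norm_num : (0:ℝ) ≤ 2) T
    _ = μH[2] T := by simp
    _ ≤ μH[2] (Metric.closedBall 0 r) := measure_mono hTball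
    _ ≤ ENNReal.ofReal (8 * r ^ 2) := ball_area2 hW r hr

lemma box_integral (s aa : ℝ) (hs : 0 ≤ s) (g : Fin 3 → ℝ) :
    ∫ u in (Set.univ.pi fun _ : Fin 3 => Set.Icc (-s) s), (aa + ∑ i, g i * u i) ^ 2 =
      8 * s ^ 3 * aa ^ 2 + 8 / 3 * s ^ 5 * (∑ i, g i ^ 2) := by
  set box : Set (Fin 3 → ℝ) := Set.univ.pi fun _ : Fin 3 => Set.Icc (-s) s with hboxdef
  have hbox : MeasurableSet box := MeasurableSet.univ_pi fun _ => measurableSet_Icc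
  have hcomp : IsCompact box := isCompact_univ_pi fun _ => isCompact_Icc
  have key : ∀ e : Fin 3 → ℕ, (∫ u in box, ∏ i, (u i) ^ (e i)) =
      ∏ i, ∫ t in Set.Icc (-s) s, t ^ (e i) := by
    intro e
    rw [← integral_indicator hbox]
    have heq : (box.indicator fun u => ∏ i, (u i) ^ (e i)) =
        fun u => ∏ i, Set.indicator (Set.Icc (-s) s) (fun t => t ^ (e i)) (u i) := by
      funext u
      by_cases hu : u ∈ box
      · rw [Set.indicator_of_mem hu]
        have hM : ∀ i, u i ∈ Set.Icc (-s) s := by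
          intro i; exact hu i trivial
        exact Finset.prod_congr rfl fun i _ => (Set.indicator_of_mem (hM i) _).symm
      · rw [Set.indicator_of_notMem hu]
        obtain ⟨i, hi⟩ : ∃ i, u i ∉ Set.Icc (-s) s := by
          by_contra hc
          push_neg at hc
          exact hu fun i _ => hc i
        exact (Finset.prod_eq_zero (Finset.mem_univ i)
          (Set.indicator_of_notMem hi _)).symm
    rw [heq,
      integral_fintype_prod_volume_eq_prod
        (fun i t => Set.indicator (Set.Icc (-s) s) (fun t => t ^ (e i)) t)]
    exact Finset.prod_congr rfl fun i _ => integral_indicator measurableSet_Icc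
  have oneD : ∀ n : ℕ, (∫ t in Set.Icc (-s) s, t ^ n) =
      (s ^ (n + 1) - (-s) ^ (n + 1)) / (n + 1) := by
    intro n
    rw [MeasureTheory.integral_Icc_eq_integral_Ioc,
      ← intervalIntegral.integral_of_le (by linarith : -s ≤ s), integral_pow]
  -- the three monomial integrals
  have I0 : (∫ _u in box, (1:ℝ)) = 8 * s ^ 3 := by
    rw [setIntegral_const, smul_eq_mul, mul_one, hboxdef, measureReal_def, volume_pi_pi]
    simp only [Real.volume_Icc, Finset.prod_const, Finset.card_univ, Fintype.card_fin]
    rw [ENNReal.toReal_pow, ENNReal.toReal_ofReal (by linarith)]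
    ring
  have I1 : ∀ i : Fin 3, (∫ u in box, u i) = 0 := by
    intro i
    have h := key fun k => if k = i then 1 else 0
    have h2 : ∀ u : Fin 3 → ℝ, (∏ k, (u k) ^ (if k = i then 1 else 0)) = u i := by
      intro u
      simp only [pow_ite, pow_one, pow_zero]
      simp [Finset.prod_ite_eq']
    simp only [h2] at h
    rw [h]
    apply Finset.prod_eq_zero (Finset.mem_univ i)
    rw [if_pos rfl, oneD]
    push_cast
    ring
  have I2d : ∀ i j : Fin 3, i ≠ j → (∫ u in box, u i * u j) = 0 := by
    intro i j hij
    have h := key fun k => (if k = i then 1 else 0) + (if k = j then 1 else 0)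
    have h2 : ∀ u : Fin 3 → ℝ,
        (∏ k, (u k) ^ ((if k = i then 1 else 0) + (if k = j then 1 else 0))) = u i * u j := by
      intro u
      simp only [pow_add]
      rw [Finset.prod_mul_distrib]
      simp only [pow_ite, pow_one, pow_zero]
      simp [Finset.prod_ite_eq']
    simp only [h2] at h
    rw [h]
    apply Finset.prod_eq_zero (Finset.mem_univ i)
    rw [if_pos rfl, if_neg hij, oneD]
    push_cast
    ring
  have I2s : ∀ i : Fin 3, (∫ u in box, u i * u i) = 8 / 3 * s ^ 5 := by
    intro i
    have h := key fun k => if k = i then 2 else 0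
    have h2 : ∀ u : Fin 3 → ℝ, (∏ k, (u k) ^ (if k = i then 2 else 0)) = u i * u i := by
      intro u
      simp only [pow_ite, pow_zero]
      rw [Finset.prod_ite_eq']
      simp [sq]
    simp only [h2] at h
    rw [h]
    have : ∀ k : Fin 3, (∫ t in Set.Icc (-s) s, t ^ (if k = i then 2 else 0)) =
        if k = i then 2 / 3 * s ^ 3 else 2 * s := by
      intro k
      by_cases hk : k = i <;> simp only [hk, if_pos, if_neg, oneD] <;> norm_num <;> ring
    simp only [this]
    rw [← Finset.mul_prod_erase Finset.univ _ (Finset.mem_univ i), if_pos rfl]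
    have h3 : (∏ k ∈ Finset.univ.erase i, if k = i then 2 / 3 * s ^ 3 else 2 * s) = (2*s)^2 := by
      rw [Finset.prod_congr rfl (fun k hk => if_neg (Finset.ne_of_mem_erase hk)),
        Finset.prod_const, Finset.card_erase_of_mem (Finset.mem_univ i)]
      norm_num
    rw [h3]
    ring
  have hint : ∀ f : (Fin 3 → ℝ) → ℝ, Continuous f → IntegrableOn f box := fun f hf =>
    hf.continuousOn.integrableOn_compact hcomp
  have hc1 : Continuous (fun _u : Fin 3 → ℝ => aa ^ 2) := continuous_const
  have hc2 : Continuous (fun u : Fin 3 → ℝ => ∑ i, 2 * aa * g i * u i) := by fun_prop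
  have hc3 : Continuous (fun u : Fin 3 → ℝ => ∑ i, ∑ j, g i * g j * (u i * u j)) := by fun_prop
  have split : (∫ u in box, (aa + ∑ i, g i * u i) ^ 2) =
      (∫ _u in box, aa ^ 2) + ((∫ u in box, ∑ i, 2 * aa * g i * u i) +
        (∫ u in box, ∑ i, ∑ j, g i * g j * (u i * u j))) := by
    calc (∫ u in box, (aa + ∑ i, g i * u i) ^ 2)
        = ∫ u in box, (aa ^ 2 + ((∑ i, 2 * aa * g i * u i) +
            ∑ i, ∑ j, g i * g j * (u i * u j))) := by
          apply setIntegral_congr_fun hbox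
          intro u _
          simp only [Fin.sum_univ_three]
          ring
      _ = (∫ _u in box, aa ^ 2) + (∫ u in box, ((∑ i, 2 * aa * g i * u i) +
            ∑ i, ∑ j, g i * g j * (u i * u j))) :=
          integral_add (hint _ hc1) ((hint _ hc2).add (hint _ hc3))
      _ = (∫ _u in box, aa ^ 2) + ((∫ u in box, ∑ i, 2 * aa * g i * u i) +
            (∫ u in box, ∑ i, ∑ j, g i * g j * (u i * u j))) := by
          rw [integral_add (hint _ hc2) (hint _ hc3)]
  have e1 : (∫ _u in box, aa ^ 2) = aa ^ 2 * (8 * s ^ 3) := by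
    rw [← I0, ← integral_const_mul]
    simp
  have e2 : (∫ u in box, ∑ i, 2 * aa * g i * u i) = 0 := by
    rw [integral_finset_sum]
    · apply Finset.sum_eq_zero
      intro i _
      rw [integral_const_mul, I1 i, mul_zero]
    · intro i _
      exact (hint _ (by fun_prop)).const_mul _
  have e3 : (∫ u in box, ∑ i, ∑ j, g i * g j * (u i * u j)) = 8 / 3 * s ^ 5 * ∑ i, g i ^ 2 := by
    rw [integral_finset_sum]
    · have : ∀ i : Fin 3, (∫ u in box, ∑ j, g i * g j * (u i * u j)) =
          g i ^ 2 * (8 / 3 * s ^ 5) := by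
        intro i
        rw [integral_finset_sum]
        · rw [Finset.sum_eq_single i]
          · rw [integral_const_mul, I2s i]
            ring
          · intro j _ hji
            rw [integral_const_mul, I2d i j (Ne.symm hji), mul_zero]
          · intro hi
            exact absurd (Finset.mem_univ i) hi
        · intro j _
          exact (hint _ (by fun_prop)).const_mul _
      rw [Finset.sum_congr rfl fun i _ => this i, ← Finset.sum_mul]
      ring
    · intro i _
      exact hint _ (by fun_prop)
  rw [split, e1, e2, e3]
  ring

lemma cube_lower (z g : EuclideanSpace ℝ (Fin 3)) (c : ℝ) (s : ℝ) (hs : 0 ≤ s) :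
    ∃ C : Set (EuclideanSpace ℝ (Fin 3)), C ⊆ Metric.closedBall z (Real.sqrt 3 * s) ∧
      (∫ x in C, (⟪g, x⟫ + c) ^ 2) =
        8 * s ^ 3 * (⟪g, z⟫ + c) ^ 2 + 8 / 3 * s ^ 5 * ‖g‖ ^ 2 := by
  set box : Set (Fin 3 → ℝ) := Set.univ.pi fun _ : Fin 3 => Set.Icc (-s) s with hboxdef
  set T : (Fin 3 → ℝ) ≃ᵐ EuclideanSpace ℝ (Fin 3) :=
    (MeasurableEquiv.toLp 2 (Fin 3 → ℝ)).trans
      (Homeomorph.addLeft z).toMeasurableEquiv with hT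
  have hTmp : MeasurePreserving T volume volume :=
    (measurePreserving_add_left volume z).comp
      (EuclideanSpace.volume_preserving_symm_measurableEquiv_toLp (Fin 3)).symm
  have hTapp : ∀ u : Fin 3 → ℝ, ∀ i, (T u) i = z i + u i := by
    intro u i
    rfl
  refine ⟨T '' box, ?_, ?_⟩
  · rintro x ⟨u, hu, rfl⟩
    rw [Metric.mem_closedBall, EuclideanSpace.dist_eq]
    have hb : ∀ i, dist ((T u) i) (z i) ≤ s := by
      intro i
      rw [hTapp u i, Real.dist_eq, add_sub_cancel_left]
      have := hu i trivial
      rw [Set.mem_Icc] at this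
      exact abs_le.2 this
    calc Real.sqrt (∑ i, dist ((T u) i) (z i) ^ 2) ≤ Real.sqrt (∑ _i : Fin 3, s ^ 2) := by
          apply Real.sqrt_le_sqrt
          exact Finset.sum_le_sum fun i _ => pow_le_pow_left₀ dist_nonneg (hb i) 2
      _ = Real.sqrt 3 * s := by
          rw [Finset.sum_const]
          simp only [Finset.card_univ, Fintype.card_fin, nsmul_eq_mul]
          rw [Real.sqrt_mul (by norm_num), Real.sqrt_sq hs]
          norm_num
  · rw [hTmp.setIntegral_image_emb T.measurableEmbedding]
    have hinner : ∀ u : Fin 3 → ℝ, ⟪g, T u⟫ + c = (⟪g, z⟫ + c) + ∑ i, g i * u i := by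
      intro u
      have h1 : ∀ x : EuclideanSpace ℝ (Fin 3), ⟪g, x⟫ = ∑ i, g i * x i := by
        intro x
        rw [PiLp.inner_apply]
        exact Finset.sum_congr rfl fun i _ => by simp [mul_comm]
      rw [h1, h1]
      have : ∀ i, (T u) i = z i + u i := hTapp u
      rw [Finset.sum_congr rfl fun i _ => by rw [this i]]
      rw [show (∑ i, g i * (z i + u i)) = (∑ i, g i * z i) + ∑ i, g i * u i by
        rw [← Finset.sum_add_distrib]; exact Finset.sum_congr rfl fun i _ => by ring]
      ring
    calc (∫ u in box, (⟪g, T u⟫ + c) ^ 2)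
        = ∫ u in box, ((⟪g, z⟫ + c) + ∑ i, g i * u i) ^ 2 := by
          apply setIntegral_congr_fun (MeasurableSet.univ_pi fun _ => measurableSet_Icc)
          intro u _
          simp only
          rw [hinner u]
      _ = 8 * s ^ 3 * (⟪g, z⟫ + c) ^ 2 + 8 / 3 * s ^ 5 * ‖g‖ ^ 2 := by
          rw [box_integral s _ hs (fun i => g i)]
          congr 1
          have : ‖g‖ ^ 2 = ∑ i, g i ^ 2 := by
            rw [← real_inner_self_eq_norm_sq, PiLp.inner_apply]
            exact Finset.sum_congr rfl fun i _ => by rw [sq]; rfl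
          rw [this]

lemma scalar_ineq (lam h a γ : ℝ) (hl0 : 0 < lam) (hl1 : lam < 1) (hh : 0 < h) (hγ : 0 ≤ γ) :
    (γ * h + |a|) ^ 2 * (8 * h ^ 2) ≤
      256 / lam ^ 6 * (1 / 3) * h⁻¹ *
        (8 * (lam * h / Real.sqrt 3) ^ 3 * a ^ 2 +
          8 / 3 * (lam * h / Real.sqrt 3) ^ 5 * ‖(γ:ℝ)‖ ^ 2) := by
  have hrn : ‖γ‖ = γ := by rw [Real.norm_eq_abs, abs_of_nonneg hγ]
  rw [hrn]
  have hr2 : Real.sqrt 3 ^ 2 = 3 := Real.sq_sqrt (by norm_num)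
  have hrl : (1.7:ℝ) < Real.sqrt 3 := by nlinarith [Real.sqrt_nonneg 3, hr2]
  have hru : Real.sqrt 3 < (1.8:ℝ) := by nlinarith [Real.sqrt_nonneg 3, hr2]
  set r := Real.sqrt 3 with hr
  have hr0 : (0:ℝ) < r := by linarith
  have hlam3 : lam ^ 3 ≤ 1 := pow_le_one₀ hl0.le hl1.le
  have hlam30 : (0:ℝ) < lam ^ 3 := by positivity
  have e3 : (lam * h / r) ^ 3 = lam ^ 3 * h ^ 3 / (3 * r) := by
    rw [div_pow, mul_pow]
    congr 1
    calc r ^ 3 = r ^ 2 * r := by ring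
      _ = 3 * r := by rw [hr2]
  have e5 : (lam * h / r) ^ 5 = lam ^ 5 * h ^ 5 / (9 * r) := by
    rw [div_pow, mul_pow]
    congr 1
    calc r ^ 5 = (r ^ 2) ^ 2 * r := by ring
      _ = 9 * r := by rw [hr2]; ring
  rw [e3, e5]
  have hRHSeq : 256 / lam ^ 6 * (1 / 3) * h⁻¹ *
        (8 * (lam ^ 3 * h ^ 3 / (3 * r)) * a ^ 2 + 8 / 3 * (lam ^ 5 * h ^ 5 / (9 * r)) * γ ^ 2)
      = 2048 / (9 * r * lam ^ 3) * (a ^ 2 * h ^ 2) + 2048 / (81 * r * lam) * (γ ^ 2 * h ^ 4) := by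
    field_simp
    ring
  rw [hRHSeq]
  have c1 : (126:ℝ) ≤ 2048 / (9 * r * lam ^ 3) := by
    rw [le_div_iff₀ (by positivity)]
    nlinarith [mul_le_mul hru.le hlam3 hlam30.le (by linarith : (0:ℝ) ≤ 1.8)]
  have c2 : (14:ℝ) ≤ 2048 / (81 * r * lam) := by
    rw [le_div_iff₀ (by positivity)]
    nlinarith [mul_le_mul hru.le hl1.le hl0.le (by linarith : (0:ℝ) ≤ 1.8)]
  have key : (γ * h + |a|) ^ 2 * (8 * h ^ 2) ≤ 126 * (a ^ 2 * h ^ 2) + 14 * (γ ^ 2 * h ^ 4) := by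
    nlinarith [mul_nonneg (sq_nonneg (3 * |a| - γ * h)) (sq_nonneg h), sq_abs a,
      abs_nonneg a, mul_nonneg hγ hh.le, sq_nonneg h]
  calc (γ * h + |a|) ^ 2 * (8 * h ^ 2) ≤ 126 * (a ^ 2 * h ^ 2) + 14 * (γ ^ 2 * h ^ 4) := key
    _ ≤ 2048 / (9 * r * lam ^ 3) * (a ^ 2 * h ^ 2) + 2048 / (81 * r * lam) * (γ ^ 2 * h ^ 4) := by
        have t1 := mul_le_mul_of_nonneg_right c1 (by positivity : (0:ℝ) ≤ a ^ 2 * h ^ 2)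
        have t2 := mul_le_mul_of_nonneg_right c2 (by positivity : (0:ℝ) ≤ γ ^ 2 * h ^ 4)
        linarith

/-- trace inequality on anisotropic elements with inscribed ball:
let `K ⊆ ℝ³` be a polyhedron of diameter `h_K` whose boundary consists of `NF`
planar faces, containing a ball of radius `≥ λ h_K` with `λ ∈ (0,1)`.  Then for every
affine `v` (gradient `g`),
`‖v‖_{L²(∂K)} ≤ 16 λ⁻³ √(NF/3) h_K^{-1/2} ‖v‖_{L²(K)}`,
where the boundary norm uses the 2-dimensional Hausdorff (surface) measure. -/
theorem stmt7
    (K : Set (EuclideanSpace ℝ (Fin 3)))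
    (hKc : IsCompact K) (hKne : (interior K).Nonempty)
    (NF : ℕ) (F : Fin NF → Set (EuclideanSpace ℝ (Fin 3)))
    (hplanar : ∀ j, ∃ (n : EuclideanSpace ℝ (Fin 3)) (d : ℝ), n ≠ 0 ∧
      F j ⊆ {x | ⟪n, x⟫ = d})
    (hbd : frontier K = ⋃ j, F j)
    (lam : ℝ) (hlam0 : 0 < lam) (hlam1 : lam < 1)
    (z : EuclideanSpace ℝ (Fin 3))
    (hball : Metric.closedBall z (lam * Metric.diam K) ⊆ K)
    (g : EuclideanSpace ℝ (Fin 3)) (c : ℝ)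
    (v : EuclideanSpace ℝ (Fin 3) → ℝ)
    (hv : ∀ x, v x = ⟪g, x⟫ + c) :
    Real.sqrt (∫ x in frontier K, (v x) ^ 2 ∂(μH[2]))
      ≤ 16 / lam ^ 3 * Real.sqrt ((NF : ℝ) / 3) * (Real.sqrt (Metric.diam K))⁻¹ *
        Real.sqrt (∫ x in K, (v x) ^ 2) := by
  have hveq : v = fun x => ⟪g, x⟫ + c := funext hv
  subst hveq
  set h := Metric.diam K with hh
  have hKb : Bornology.IsBounded K := hKc.isBounded
  -- diameter is positive
  have hh0 : 0 < h := by
    obtain ⟨x, hx⟩ := hKne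
    obtain ⟨ε, hε0, hεb⟩ := Metric.isOpen_iff.1 isOpen_interior x hx
    have hx' : x ∈ K := interior_subset hx
    set w : EuclideanSpace ℝ (Fin 3) := (ε/2) • EuclideanSpace.single 0 (1:ℝ) with hwdef
    have hwn : ‖w‖ = ε/2 := by
      rw [hwdef, norm_smul, EuclideanSpace.norm_single, Real.norm_eq_abs, norm_one, mul_one,
        abs_of_pos (by linarith : (0:ℝ) < ε/2)]
    have hy : x + w ∈ K := by
      apply interior_subset (hεb ?_)
      rw [Metric.mem_ball, dist_eq_norm, add_sub_cancel_left, hwn]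
      linarith
    have hd : dist x (x + w) = ε/2 := by
      rw [dist_eq_norm]
      simp [hwn]
    calc (0:ℝ) < ε/2 := by linarith
      _ = dist x (x + w) := hd.symm
      _ ≤ h := Metric.dist_le_diam_of_mem hKb hx' hy
  have hz : z ∈ K := hball (Metric.mem_closedBall_self (by positivity))
  set vf : EuclideanSpace ℝ (Fin 3) → ℝ := fun x => ⟪g, x⟫ + c with hvf
  set a : ℝ := ⟪g, z⟫ + c with ha
  set M : ℝ := (‖g‖ * h + |a|) ^ 2 with hM
  -- sup bound on K
  have hsup : ∀ x ∈ K, vf x ^ 2 ≤ M := by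
    intro x hx
    have h1 : vf x = a + ⟪g, x - z⟫ := by
      rw [hvf, ha, inner_sub_right]
      ring
    have h2 : |vf x| ≤ ‖g‖ * h + |a| := by
      rw [h1]
      calc |a + ⟪g, x - z⟫| ≤ |a| + |⟪g, x - z⟫| := abs_add_le _ _
        _ ≤ |a| + ‖g‖ * ‖x - z‖ := by
            have := abs_real_inner_le_norm g (x - z)
            linarith
        _ ≤ |a| + ‖g‖ * h := by
            have : ‖x - z‖ ≤ h := by
              rw [← dist_eq_norm]
              exact Metric.dist_le_diam_of_mem hKb hx hz
            nlinarith [norm_nonneg g]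
        _ = ‖g‖ * h + |a| := by ring
    calc vf x ^ 2 = |vf x| ^ 2 := (sq_abs _).symm
      _ ≤ (‖g‖ * h + |a|) ^ 2 := by
          apply pow_le_pow_left₀ (abs_nonneg _) h2
  have hM0 : 0 ≤ M := sq_nonneg _
  -- surface measure bound
  have hfrK : frontier K ⊆ K := hKc.isClosed.frontier_subset
  have hface : ∀ j, μH[2] (F j) ≤ ENNReal.ofReal (8 * h ^ 2) := by
    intro j
    obtain ⟨n, d, hn, hsub⟩ := hplanar j
    apply face_area _ n d hn hsub h hh0.le
    intro x hx y hy
    have hx' : x ∈ K := hfrK (hbd ▸ Set.mem_iUnion.2 ⟨j, hx⟩)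
    have hy' : y ∈ K := hfrK (hbd ▸ Set.mem_iUnion.2 ⟨j, hy⟩)
    exact Metric.dist_le_diam_of_mem hKb hx' hy'
  have hsurf : μH[2] (frontier K) ≤ ENNReal.ofReal ((NF : ℝ) * (8 * h ^ 2)) := by
    rw [hbd]
    calc μH[2] (⋃ j, F j) ≤ ∑' j, μH[2] (F j) := measure_iUnion_le _
      _ ≤ (NF : ℝ≥0∞) * ENNReal.ofReal (8 * h ^ 2) := by
          rw [tsum_fintype]
          calc ∑ j, μH[2] (F j) ≤ ∑ _j : Fin NF, ENNReal.ofReal (8 * h ^ 2) :=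
                Finset.sum_le_sum fun j _ => hface j
            _ = (NF : ℝ≥0∞) * ENNReal.ofReal (8 * h ^ 2) := by
                rw [Finset.sum_const, Finset.card_univ, Fintype.card_fin, nsmul_eq_mul]
      _ = ENNReal.ofReal ((NF : ℝ) * (8 * h ^ 2)) := by
          rw [ENNReal.ofReal_mul (p := (NF:ℝ)) (by positivity), ENNReal.ofReal_natCast]
  have hfin : μH[2] (frontier K) < ⊤ :=
    lt_of_le_of_lt hsurf ENNReal.ofReal_lt_top
  have hcont : Continuous vf := by
    apply Continuous.add ?_ continuous_const
    exact Continuous.inner continuous_const continuous_id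
  -- Step A : boundary integral bound
  have hA : (∫ x in frontier K, vf x ^ 2 ∂(μH[2])) ≤ M * ((NF : ℝ) * (8 * h ^ 2)) := by
    have h1 : ‖∫ x in frontier K, vf x ^ 2 ∂(μH[2])‖ ≤ M * (μH[2] (frontier K)).toReal := by
      apply norm_setIntegral_le_of_norm_le_const hfin
      · intro x hx
        rw [Real.norm_eq_abs, abs_of_nonneg (sq_nonneg _)]
        exact hsup x (hfrK hx)
    calc (∫ x in frontier K, vf x ^ 2 ∂(μH[2]))
        ≤ ‖∫ x in frontier K, vf x ^ 2 ∂(μH[2])‖ := le_abs_self _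
      _ ≤ M * (μH[2] (frontier K)).toReal := h1
      _ ≤ M * ((NF : ℝ) * (8 * h ^ 2)) := by
          apply mul_le_mul_of_nonneg_left ?_ hM0
          exact ENNReal.toReal_le_of_le_ofReal (by positivity) hsurf
  -- Step C/D : volume integral lower bound
  set s : ℝ := lam * h / Real.sqrt 3 with hsdef
  have hs0 : 0 ≤ s := by positivity
  have hs3 : Real.sqrt 3 * s = lam * h := by
    rw [hsdef, mul_div_assoc']
    rw [mul_comm (Real.sqrt 3) (lam * h), mul_div_assoc]
    rw [div_self (by positivity : Real.sqrt 3 ≠ 0), mul_one]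
  obtain ⟨C, hCsub, hCval⟩ := cube_lower z g c s hs0
  have hCK : C ⊆ K := by
    intro x hx
    apply hball
    have := hCsub hx
    rwa [hs3] at this
  have hIK : IntegrableOn (fun x => vf x ^ 2) K :=
    (hcont.pow 2).continuousOn.integrableOn_compact hKc
  have hmK : MeasurableSet K := hKc.isClosed.measurableSet
  have hlow : 8 * s ^ 3 * a ^ 2 + 8 / 3 * s ^ 5 * ‖g‖ ^ 2 ≤ ∫ x in K, vf x ^ 2 := by
    rw [ha, ← hCval]
    apply setIntegral_mono_set hIK
    · exact Filter.Eventually.of_forall fun x => sq_nonneg _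
    · exact HasSubset.Subset.eventuallyLE hCK
  have hB0 : 0 ≤ ∫ x in K, vf x ^ 2 :=
    setIntegral_nonneg hmK fun x _ => sq_nonneg _
  -- final assembly
  set c₀ : ℝ := 16 / lam ^ 3 * Real.sqrt ((NF : ℝ) / 3) * (Real.sqrt h)⁻¹ with hc₀
  have hc₀0 : 0 ≤ c₀ := by positivity
  have hc₀sq : c₀ ^ 2 = 256 / lam ^ 6 * ((NF : ℝ) / 3) * h⁻¹ := by
    rw [hc₀, mul_pow, mul_pow, Real.sq_sqrt (by positivity), inv_pow,
      Real.sq_sqrt hh0.le, div_pow, ← pow_mul]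
    norm_num
  have hmain : (∫ x in frontier K, vf x ^ 2 ∂(μH[2])) ≤ c₀ ^ 2 * ∫ x in K, vf x ^ 2 := by
    have hscalar := scalar_ineq lam h a ‖g‖ hlam0 hlam1 hh0 (norm_nonneg g)
    rw [Real.norm_eq_abs, abs_of_nonneg (norm_nonneg g)] at hscalar
    calc (∫ x in frontier K, vf x ^ 2 ∂(μH[2])) ≤ M * ((NF : ℝ) * (8 * h ^ 2)) := hA
      _ = (NF : ℝ) * (M * (8 * h ^ 2)) := by ring
      _ ≤ (NF : ℝ) * (256 / lam ^ 6 * (1 / 3) * h⁻¹ *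
            (8 * s ^ 3 * a ^ 2 + 8 / 3 * s ^ 5 * ‖g‖ ^ 2)) := by
          apply mul_le_mul_of_nonneg_left ?_ (Nat.cast_nonneg NF)
          rw [hM, hsdef]
          exact hscalar
      _ = c₀ ^ 2 * (8 * s ^ 3 * a ^ 2 + 8 / 3 * s ^ 5 * ‖g‖ ^ 2) := by
          rw [hc₀sq]; ring
      _ ≤ c₀ ^ 2 * ∫ x in K, vf x ^ 2 :=
          mul_le_mul_of_nonneg_left hlow (sq_nonneg _)
  calc Real.sqrt (∫ x in frontier K, vf x ^ 2 ∂(μH[2]))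
      ≤ Real.sqrt (c₀ ^ 2 * ∫ x in K, vf x ^ 2) := Real.sqrt_le_sqrt hmain
    _ = c₀ * Real.sqrt (∫ x in K, vf x ^ 2) := by
        rw [Real.sqrt_mul (sq_nonneg _), Real.sqrt_sq hc₀0]
end

section
/- (Norm comparison of affine functions on concentric balls) Let B ⊂ ℝ³ be a ball of radius ρ and B̃ the concentric ball of radius R ≥ ρ, and set λ = ρ/R. Then for every affine function v, ‖v‖²_{L²(B̃)} ≤ ((1 + √(1−λ²))/λ)⁵ ‖v‖²_{L²(B)}. -/
open MeasureTheory
open scoped RealInnerProductSpace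


private lemma stmt8_scale (f : EuclideanSpace ℝ (Fin 3) → ℝ) (r : ℝ) (hr : 0 < r) :
    ∫ x in Metric.closedBall (0:EuclideanSpace ℝ (Fin 3)) r, f x
      = r^3 • ∫ y in Metric.closedBall (0:EuclideanSpace ℝ (Fin 3)) 1, f (r • y) := by
  rw [Measure.setIntegral_comp_smul_of_pos volume f _ hr, smul_closedBall _ _ zero_le_one]
  simp [abs_of_pos hr, smul_smul, finrank_euclideanSpace]
  rw [mul_inv_cancel_left₀ (by positivity : (r:ℝ)^3 ≠ 0)]

private lemma stmt8_odd (g : EuclideanSpace ℝ (Fin 3)) (r : ℝ) :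
    ∫ x in Metric.closedBall (0:EuclideanSpace ℝ (Fin 3)) r, ⟪g, x⟫ = 0 := by
  have h : ∫ x in Metric.closedBall (0:EuclideanSpace ℝ (Fin 3)) r, ⟪g, x⟫
      = - ∫ x in Metric.closedBall (0:EuclideanSpace ℝ (Fin 3)) r, ⟪g, x⟫ := by
    conv_lhs => rw [← integral_indicator (measurableSet_closedBall)]
    rw [← integral_neg_eq_self]
    rw [← integral_neg, ← integral_indicator (measurableSet_closedBall)]
    congr 1
    ext x
    by_cases hx : x ∈ Metric.closedBall (0:EuclideanSpace ℝ (Fin 3)) r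
    · have hx' : -x ∈ Metric.closedBall (0:EuclideanSpace ℝ (Fin 3)) r := by simpa using hx
      simp [Set.indicator_of_mem, hx, hx', inner_neg_right]
    · have hx' : -x ∉ Metric.closedBall (0:EuclideanSpace ℝ (Fin 3)) r := by simpa using hx
      simp [Set.indicator_of_notMem, hx, hx']
  linarith

private lemma stmt8_ball (g : EuclideanSpace ℝ (Fin 3)) (a r : ℝ) (hr : 0 < r) :
    ∫ x in Metric.closedBall (0:EuclideanSpace ℝ (Fin 3)) r, (⟪g, x⟫ + a)^2
      = r^5 * (∫ x in Metric.closedBall (0:EuclideanSpace ℝ (Fin 3)) 1, ⟪g, x⟫^2)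
        + r^3 * ((volume (Metric.closedBall (0:EuclideanSpace ℝ (Fin 3)) 1)).toReal * a^2) := by
  have hc1 : Continuous fun y : EuclideanSpace ℝ (Fin 3) => ⟪g, y⟫ :=
    continuous_const.inner continuous_id
  have hK : IsCompact (Metric.closedBall (0:EuclideanSpace ℝ (Fin 3)) 1) :=
    isCompact_closedBall _ _
  have hint1 : IntegrableOn (fun y : EuclideanSpace ℝ (Fin 3) => r^2 * ⟪g, y⟫^2)
      (Metric.closedBall (0:EuclideanSpace ℝ (Fin 3)) 1) :=
    ((continuous_const.mul (hc1.pow 2)).continuousOn).integrableOn_compact hK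
  have hint2 : IntegrableOn (fun y : EuclideanSpace ℝ (Fin 3) => 2*r*a * ⟪g, y⟫)
      (Metric.closedBall (0:EuclideanSpace ℝ (Fin 3)) 1) :=
    ((continuous_const.mul hc1).continuousOn).integrableOn_compact hK
  have hint3 : IntegrableOn (fun _ : EuclideanSpace ℝ (Fin 3) => a^2)
      (Metric.closedBall (0:EuclideanSpace ℝ (Fin 3)) 1) :=
    (continuousOn_const).integrableOn_compact hK
  rw [stmt8_scale _ r hr]
  have hE : ∀ y : EuclideanSpace ℝ (Fin 3),
      (⟪g, r • y⟫ + a)^2 = r^2 * ⟪g, y⟫^2 + (2*r*a * ⟪g, y⟫ + a^2) := by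
    intro y
    rw [real_inner_smul_right]
    ring
  rw [show (fun y : EuclideanSpace ℝ (Fin 3) => (⟪g, r • y⟫ + a)^2)
      = fun y => r^2 * ⟪g, y⟫^2 + (2*r*a * ⟪g, y⟫ + a^2) from funext hE]
  have hint23 : IntegrableOn (fun y : EuclideanSpace ℝ (Fin 3) => 2*r*a * ⟪g, y⟫ + a^2)
      (Metric.closedBall (0:EuclideanSpace ℝ (Fin 3)) 1) :=
    (((continuous_const.mul hc1).add continuous_const).continuousOn).integrableOn_compact hK
  rw [integral_add hint1 hint23, integral_add hint2 hint3,
    MeasureTheory.integral_const_mul, MeasureTheory.integral_const_mul, stmt8_odd, setIntegral_const]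
  simp only [smul_eq_mul, Measure.real]
  ring

private lemma stmt8_trans (z g : EuclideanSpace ℝ (Fin 3)) (c r : ℝ)
    (v : EuclideanSpace ℝ (Fin 3) → ℝ) (hv : ∀ x, v x = ⟪g, x⟫ + c) :
    ∫ x in Metric.closedBall z r, (v x)^2
      = ∫ y in Metric.closedBall (0:EuclideanSpace ℝ (Fin 3)) r, (⟪g, y⟫ + (⟪g, z⟫ + c))^2 := by
  rw [← integral_indicator (measurableSet_closedBall),
    ← integral_indicator (measurableSet_closedBall),
    ← integral_add_right_eq_self ((Metric.closedBall z r).indicator fun x => (v x)^2) z]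
  congr 1
  ext y
  have hmem : y + z ∈ Metric.closedBall z r ↔ y ∈ Metric.closedBall (0:EuclideanSpace ℝ (Fin 3)) r := by
    simp [Metric.mem_closedBall, dist_eq_norm]
  have hval : v (y + z) = ⟪g, y⟫ + (⟪g, z⟫ + c) := by
    rw [hv, inner_add_right]; ring
  by_cases hy : y ∈ Metric.closedBall (0:EuclideanSpace ℝ (Fin 3)) r
  · rw [Set.indicator_of_mem (hmem.mpr hy), Set.indicator_of_mem hy, hval]
  · rw [Set.indicator_of_notMem (fun h => hy (hmem.mp h)), Set.indicator_of_notMem hy]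


/-- norm comparison of affine functions on concentric balls:
for concentric balls `B = B(z,ρ) ⊆ B̃ = B(z,R)` in `ℝ³` with `λ = ρ/R`, every affine
function `v` satisfies `‖v‖²_{L²(B̃)} ≤ ((1 + √(1−λ²))/λ)⁵ ‖v‖²_{L²(B)}`. -/
theorem stmt8
    (z : EuclideanSpace ℝ (Fin 3))
    (ρ R : ℝ) (hρ : 0 < ρ) (hρR : ρ ≤ R)
    (g : EuclideanSpace ℝ (Fin 3)) (c : ℝ)
    (v : EuclideanSpace ℝ (Fin 3) → ℝ)
    (hv : ∀ x, v x = ⟪g, x⟫ + c) :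
    (∫ x in Metric.closedBall z R, (v x) ^ 2)
      ≤ ((1 + Real.sqrt (1 - (ρ / R) ^ 2)) / (ρ / R)) ^ 5 *
        ∫ x in Metric.closedBall z ρ, (v x) ^ 2 := by
  have hR : 0 < R := lt_of_lt_of_le hρ hρR
  set a : ℝ := ⟪g, z⟫ + c with ha
  set A : ℝ := ∫ x in Metric.closedBall (0:EuclideanSpace ℝ (Fin 3)) 1, ⟪g, x⟫^2 with hA
  set W : ℝ := (volume (Metric.closedBall (0:EuclideanSpace ℝ (Fin 3)) 1)).toReal * a^2 with hW
  have hAnn : 0 ≤ A := setIntegral_nonneg measurableSet_closedBall (fun y _ => sq_nonneg _)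
  have hWnn : 0 ≤ W := mul_nonneg ENNReal.toReal_nonneg (sq_nonneg _)
  have e1 : ∫ x in Metric.closedBall z R, (v x)^2 = R^5 * A + R^3 * W := by
    rw [stmt8_trans z g c R v hv, stmt8_ball g a R hR]
  have e2 : ∫ x in Metric.closedBall z ρ, (v x)^2 = ρ^5 * A + ρ^3 * W := by
    rw [stmt8_trans z g c ρ v hv, stmt8_ball g a ρ hρ]
  rw [e1, e2]
  set lam : ℝ := ρ / R with hlam
  have hlam0 : 0 < lam := div_pos hρ hR
  have hs : 0 ≤ Real.sqrt (1 - lam^2) := Real.sqrt_nonneg _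
  have hK : (R/ρ)^5 ≤ ((1 + Real.sqrt (1 - lam^2)) / lam)^5 := by
    have h1 : R/ρ ≤ (1 + Real.sqrt (1 - lam^2)) / lam := by
      have : R/ρ = 1 / lam := by rw [hlam]; field_simp
      rw [this]
      gcongr
      linarith
    exact pow_le_pow_left₀ (by positivity) h1 5
  have key : R^5 * A + R^3 * W ≤ (R/ρ)^5 * (ρ^5 * A + ρ^3 * W) := by
    rw [div_pow]
    rw [div_mul_eq_mul_div, le_div_iff₀ (by positivity)]
    have h2 : ρ^2 ≤ R^2 := by nlinarith
    nlinarith [mul_nonneg (mul_nonneg hWnn (pow_nonneg hρ.le 3)) (pow_nonneg hR.le 3),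
      mul_nonneg (mul_nonneg (sub_nonneg.2 h2) (mul_nonneg (pow_nonneg hρ.le 3) (pow_nonneg hR.le 3))) hWnn,
      mul_nonneg hAnn (mul_nonneg (pow_nonneg hρ.le 5) (pow_nonneg hR.le 5))]
  calc R^5 * A + R^3 * W ≤ (R/ρ)^5 * (ρ^5 * A + ρ^3 * W) := key
    _ ≤ ((1 + Real.sqrt (1 - lam^2)) / lam)^5 * (ρ^5 * A + ρ^3 * W) :=
        mul_le_mul_of_nonneg_right hK (by positivity)
end

section
/- (Anisotropic Poincaré inequality towards a face) Let P ⊂ ℝ³ be a convex polyhedron with a face F contained in the plane {x₃ = 0}, such that the orthogonal projection of P onto that plane equals F, and let l_F be the supporting height of F (the maximum x₃-coordinate over P). Then for all u ∈ H¹(P), ‖u‖²_{L²(P)} ≤ 2 l_F ‖u‖²_{L²(F)} + 2 l_F² ‖∇u‖²_{L²(P)}. -/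
open MeasureTheory intervalIntegral
open scoped ENNReal NNReal

/-! ### Auxiliary: Cauchy–Schwarz for interval integrals -/

lemma cs_aux (f : ℝ → ℝ) (hf : Continuous f) (t : ℝ) (ht : 0 ≤ t) :
    (∫ s in (0:ℝ)..t, f s) ^ 2 ≤ t * ∫ s in (0:ℝ)..t, f s ^ 2 := by
  set I : ℝ → ℝ := fun x => ∫ s in (0:ℝ)..x, f s with hIdef
  set J : ℝ → ℝ := fun x => ∫ s in (0:ℝ)..x, f s ^ 2 with hJdef
  have hf2 : Continuous fun s => f s ^ 2 := hf.pow 2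
  have hI : ∀ x : ℝ, HasDerivAt I (f x) x := fun x =>
    intervalIntegral.integral_hasDerivAt_right (hf.intervalIntegrable _ _)
      (hf.stronglyMeasurableAtFilter _ _) hf.continuousAt
  have hJ : ∀ x : ℝ, HasDerivAt J (f x ^ 2) x := fun x =>
    intervalIntegral.integral_hasDerivAt_right (hf2.intervalIntegrable _ _)
      (hf2.stronglyMeasurableAtFilter _ _) hf2.continuousAt
  set H : ℝ → ℝ := fun x => x * J x - (I x) ^ 2 with hHdef
  have hH : ∀ x : ℝ, HasDerivAt H (J x + x * f x ^ 2 - 2 * I x ^ 1 * f x) x := by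
    intro x
    have h1 : HasDerivAt (fun x => x * J x) (1 * J x + x * f x ^ 2) x :=
      (hasDerivAt_id x).mul (hJ x)
    have h2 : HasDerivAt (fun x => (I x) ^ 2) (2 * I x ^ 1 * f x) x := by
      simpa using (hI x).fun_pow 2
    simpa [one_mul] using h1.fun_sub h2
  have hderiv_nonneg : ∀ x : ℝ, 0 ≤ x → 0 ≤ J x + x * f x ^ 2 - 2 * I x ^ 1 * f x := by
    intro x hx
    have key : J x + x * f x ^ 2 - 2 * I x ^ 1 * f x
        = ∫ s in (0:ℝ)..x, (f s - f x) ^ 2 := by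
      have e1 : ∫ s in (0:ℝ)..x, (f s - f x) ^ 2
          = ∫ s in (0:ℝ)..x, (f s ^ 2 + f x ^ 2 - 2 * f x * f s) := by
        congr 1; funext s; ring
      have i1 : IntervalIntegrable (fun s => f s ^ 2) volume 0 x :=
        hf2.intervalIntegrable _ _
      have i2 : IntervalIntegrable (fun s => f x ^ 2) volume 0 x :=
        intervalIntegrable_const
      have i3 : IntervalIntegrable (fun s => 2 * f x * f s) volume 0 x :=
        (hf.intervalIntegrable _ _).const_mul _
      rw [e1, intervalIntegral.integral_sub (i1.add i2) i3,
        intervalIntegral.integral_add i1 i2, intervalIntegral.integral_const,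
        intervalIntegral.integral_const_mul]
      simp [hIdef, hJdef, smul_eq_mul]
      ring
    rw [key]
    apply intervalIntegral.integral_nonneg hx
    intro s _; positivity
  have hmono : MonotoneOn H (Set.Icc 0 t) := by
    apply monotoneOn_of_deriv_nonneg (convex_Icc 0 t)
    · exact fun x _ => ((hH x).continuousAt).continuousWithinAt
    · intro x _; exact ((hH x).differentiableAt).differentiableWithinAt
    · intro x hx
      rw [interior_Icc] at hx
      rw [(hH x).deriv]
      exact hderiv_nonneg x hx.1.le
  have h0 : H 0 = 0 := by simp [hHdef, hIdef, hJdef]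
  have hle : H 0 ≤ H t := hmono (Set.left_mem_Icc.2 ht) (Set.mem_Icc.2 ⟨ht, le_rfl⟩) ht
  rw [h0] at hle
  simp only [hHdef, hIdef, hJdef] at hle
  linarith [hle]

/-! ### Geometric setup -/

noncomputable def Qpt (z : Fin 2 → ℝ) (t : ℝ) : EuclideanSpace ℝ (Fin 3) :=
  (WithLp.equiv 2 _).symm ![z 0, z 1, t]

@[simp] lemma Qpt_apply0 (z : Fin 2 → ℝ) (t : ℝ) : Qpt z t 0 = z 0 := rfl
@[simp] lemma Qpt_apply1 (z : Fin 2 → ℝ) (t : ℝ) : Qpt z t 1 = z 1 := rfl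
@[simp] lemma Qpt_apply2 (z : Fin 2 → ℝ) (t : ℝ) : Qpt z t 2 = t := rfl

noncomputable def psie (w : EuclideanSpace ℝ (Fin 2)) : EuclideanSpace ℝ (Fin 3) :=
  Qpt (WithLp.equiv 2 _ w) 0

@[simp] lemma psie_apply0 (w : EuclideanSpace ℝ (Fin 2)) : psie w 0 = w 0 := rfl
@[simp] lemma psie_apply1 (w : EuclideanSpace ℝ (Fin 2)) : psie w 1 = w 1 := rfl
@[simp] lemma psie_apply2 (w : EuclideanSpace ℝ (Fin 2)) : psie w 2 = 0 := rfl

lemma psie_isometry : Isometry psie := by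
  apply Isometry.of_dist_eq
  intro a b
  rw [EuclideanSpace.dist_eq, EuclideanSpace.dist_eq]
  rw [Fin.sum_univ_three, Fin.sum_univ_two]
  simp [dist_self]

lemma Qpt_zero_eq_psie (z : Fin 2 → ℝ) :
    Qpt z 0 = psie ((WithLp.equiv 2 _).symm z) := rfl

lemma Qpt_combo (z : Fin 2 → ℝ) (s t a b : ℝ) (hab : a + b = 1) :
    a • Qpt z s + b • Qpt z t = Qpt z (a * s + b * t) := by
  ext i
  fin_cases i
  · simp [Qpt, PiLp.add_apply, PiLp.smul_apply, smul_eq_mul]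
    linear_combination (z 0) * hab
  · simp [Qpt, PiLp.add_apply, PiLp.smul_apply, smul_eq_mul]
    linear_combination (z 1) * hab
  · simp [Qpt, PiLp.add_apply, PiLp.smul_apply, smul_eq_mul]

noncomputable def Phi3 : (EuclideanSpace ℝ (Fin 3)) ≃ᵐ ℝ × (Fin 2 → ℝ) :=
  ((MeasurableEquiv.toLp 2 (Fin 3 → ℝ)).symm).trans
    (MeasurableEquiv.piFinSuccAbove (fun _ => ℝ) 2)

lemma Phi3_measurePreserving : MeasurePreserving Phi3 volume volume :=
  (volume_preserving_piFinSuccAbove (fun _ : Fin 3 => ℝ) 2).comp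
    (EuclideanSpace.volume_preserving_symm_measurableEquiv_toLp (Fin 3))

lemma Phi3_symm_apply (t : ℝ) (z : Fin 2 → ℝ) : Phi3.symm (t, z) = Qpt z t := by
  show ((MeasurableEquiv.toLp 2 (Fin 3 → ℝ)).symm).symm
    ((MeasurableEquiv.piFinSuccAbove (fun _ => ℝ) 2).symm (t, z)) = Qpt z t
  have h : ((MeasurableEquiv.piFinSuccAbove (fun _ : Fin 3 => ℝ) 2).symm (t, z))
      = ![z 0, z 1, t] := by
    show (Fin.insertNthEquiv (fun _ : Fin 3 => ℝ) 2) (t, z) = _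
    funext i
    rw [Fin.insertNthEquiv_apply, show (2:Fin 3) = Fin.last 2 from rfl, Fin.insertNth_last]
    fin_cases i <;> simp [Fin.snoc] <;> congr
  rw [h]; rfl

/-! ### Hausdorff measure facts in the plane -/

lemma volume_le_hausdorff2 :
    (volume : Measure (EuclideanSpace ℝ (Fin 2))) ≤ μH[2] := by
  rw [Measure.le_iff]
  intro A hA
  have h1 : (volume : Measure (EuclideanSpace ℝ (Fin 2))) A
      = (volume : Measure (Fin 2 → ℝ)) (((MeasurableEquiv.toLp 2 (Fin 2 → ℝ)).symm).symm ⁻¹' A) := by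
    rw [((EuclideanSpace.volume_preserving_symm_measurableEquiv_toLp (Fin 2)).symm _).measure_preimage
      hA.nullMeasurableSet]
  have h2 : (((MeasurableEquiv.toLp 2 (Fin 2 → ℝ)).symm).symm ⁻¹' A)
      = (WithLp.equiv 2 (Fin 2 → ℝ)) '' A := by
    rw [← MeasurableEquiv.image_eq_preimage_symm]
    rfl
  have h3 : (volume : Measure (Fin 2 → ℝ)) ((WithLp.equiv 2 (Fin 2 → ℝ)) '' A)
      = μH[(2:ℝ)] ((WithLp.equiv 2 (Fin 2 → ℝ)) '' A) := by
    rw [show ((2:ℝ) = ((Fintype.card (Fin 2) : ℕ) : ℝ)) by simp, hausdorffMeasure_pi_real]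
  have h4 := (PiLp.lipschitzWith_ofLp 2 (fun _ : Fin 2 => ℝ)).hausdorffMeasure_image_le
    (by norm_num : (0:ℝ) ≤ 2) A
  calc (volume : Measure (EuclideanSpace ℝ (Fin 2))) A
      = μH[(2:ℝ)] ((WithLp.equiv 2 (Fin 2 → ℝ)) '' A) := by rw [h1, h2, h3]
    _ ≤ (1 : ℝ≥0∞) ^ (2:ℝ) * μH[(2:ℝ)] A := by simpa using h4
    _ = μH[(2:ℝ)] A := by simp [ENNReal.one_rpow]

lemma hausdorff2_lt_top_of_bounded (s : Set (EuclideanSpace ℝ (Fin 2)))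
    (hs : Bornology.IsBounded s) : μH[(2:ℝ)] s < ⊤ := by
  set f := (WithLp.equiv 2 (Fin 2 → ℝ)).symm with hf
  obtain ⟨K, hlip⟩ : ∃ K : ℝ≥0, LipschitzWith K f :=
    ⟨_, (PiLp.antilipschitzWith_ofLp 2 (fun _ : Fin 2 => ℝ)).to_rightInverse (fun x => rfl)⟩
  have himg : s = f '' ((WithLp.equiv 2 (Fin 2 → ℝ)) '' s) := by
    simp [hf, Set.image_image]
  have h1 : μH[(2:ℝ)] s ≤ (K : ℝ≥0∞) ^ (2:ℝ) * μH[(2:ℝ)] ((WithLp.equiv 2 (Fin 2 → ℝ)) '' s) := by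
    conv_lhs => rw [himg]
    exact hlip.hausdorffMeasure_image_le (by norm_num) _
  have h2 : μH[(2:ℝ)] ((WithLp.equiv 2 (Fin 2 → ℝ)) '' s)
      = (volume : Measure (Fin 2 → ℝ)) ((WithLp.equiv 2 (Fin 2 → ℝ)) '' s) := by
    rw [show ((2:ℝ) = ((Fintype.card (Fin 2) : ℕ) : ℝ)) by simp, hausdorffMeasure_pi_real]
  have hbd : Bornology.IsBounded ((WithLp.equiv 2 (Fin 2 → ℝ)) '' s) :=
    (PiLp.lipschitzWith_ofLp 2 (fun _ : Fin 2 => ℝ)).isBounded_image hs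
  have h3 : (volume : Measure (Fin 2 → ℝ)) ((WithLp.equiv 2 (Fin 2 → ℝ)) '' s) < ⊤ := by
    obtain ⟨r, hr⟩ := hbd.subset_closedBall 0
    exact lt_of_le_of_lt (measure_mono hr)
      (Metric.isBounded_closedBall.measure_lt_top)
  calc μH[(2:ℝ)] s ≤ (K : ℝ≥0∞) ^ (2:ℝ) * (volume : Measure (Fin 2 → ℝ))
        ((WithLp.equiv 2 (Fin 2 → ℝ)) '' s) := by rw [← h2]; exact h1
    _ < ⊤ := ENNReal.mul_lt_top (by
        apply ENNReal.rpow_lt_top_of_nonneg (by norm_num)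
        exact ENNReal.coe_ne_top) h3

lemma psie_membedding : MeasurableEmbedding psie :=
  psie_isometry.isClosedEmbedding.measurableEmbedding

lemma map_psie_restrict (G : Set (EuclideanSpace ℝ (Fin 2))) :
    Measure.map psie (Measure.hausdorffMeasure (X := EuclideanSpace ℝ (Fin 2)) 2 |>.restrict G)
      = (Measure.hausdorffMeasure (X := EuclideanSpace ℝ (Fin 3)) 2).restrict (psie '' G) := by
  apply Measure.ext
  intro A hA
  rw [psie_membedding.map_apply, Measure.restrict_apply (psie_membedding.measurable hA),
    Measure.restrict_apply hA, ← Set.image_preimage_inter psie G A,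
    psie_isometry.hausdorffMeasure_image (Or.inl (by norm_num))]

lemma face_chain (G : Set (Fin 2 → ℝ)) (F : Set (EuclideanSpace ℝ (Fin 3)))
    (k : EuclideanSpace ℝ (Fin 3) → ℝ≥0∞) (hk : Measurable k)
    (hGF : ∀ z ∈ G, Qpt z 0 ∈ F) :
    ∫⁻ z in G, k (Qpt z 0) ∂(volume : Measure (Fin 2 → ℝ))
      ≤ ∫⁻ y in F, k y ∂(μH[2]) := by
  set e := ((MeasurableEquiv.toLp 2 (Fin 2 → ℝ)).symm).symm with he
  have hQ : ∀ z : Fin 2 → ℝ, Qpt z 0 = psie (e z) := fun z => Qpt_zero_eq_psie z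
  have step1 : ∫⁻ z in G, k (Qpt z 0) ∂(volume : Measure (Fin 2 → ℝ))
      = ∫⁻ w in e '' G, k (psie w) ∂(volume : Measure (EuclideanSpace ℝ (Fin 2))) := by
    rw [← ((EuclideanSpace.volume_preserving_symm_measurableEquiv_toLp (Fin 2)).symm _).setLIntegral_comp_emb
      (MeasurableEquiv.measurableEmbedding _) (fun w => k (psie w)) G]
    exact lintegral_congr fun z => by rw [hQ]
  have step2 : ∫⁻ w in e '' G, k (psie w) ∂(volume : Measure (EuclideanSpace ℝ (Fin 2)))
      ≤ ∫⁻ w in e '' G, k (psie w) ∂(μH[2]) :=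
    lintegral_mono' (Measure.restrict_mono subset_rfl volume_le_hausdorff2) le_rfl
  have step3 : ∫⁻ w in e '' G, k (psie w) ∂(μH[2])
      = ∫⁻ y in psie '' (e '' G), k y ∂(μH[2]) := by
    rw [← map_psie_restrict, psie_membedding.lintegral_map]
  have step4 : ∫⁻ y in psie '' (e '' G), k y ∂(μH[2]) ≤ ∫⁻ y in F, k y ∂(μH[2]) := by
    apply lintegral_mono'
    · apply Measure.restrict_mono _ le_rfl
      rintro y ⟨w, ⟨z, hz, rfl⟩, rfl⟩
      rw [← hQ]; exact hGF z hz
    · exact le_rfl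
  calc _ = _ := step1
    _ ≤ _ := step2
    _ = _ := step3
    _ ≤ _ := step4

/-! ### Main theorem -/

/-- anisotropic Poincaré inequality towards a face:
let `P ⊆ ℝ³` be a convex polyhedron with a face `F` in the plane `{x₃ = 0}` such that
the vertical projection of `P` onto that plane equals `F`, and let `l` be the
supporting height (`0 ≤ x₃ ≤ l` on `P`).  Then for every `u ∈ H¹(P)` (represented by a
`C¹` function), `‖u‖²_{L²(P)} ≤ 2 l ‖u‖²_{L²(F)} + 2 l² ‖∇u‖²_{L²(P)}`, the face norm
being with respect to the 2-dimensional Hausdorff measure. -/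
theorem stmt9
    (P : Set (EuclideanSpace ℝ (Fin 3)))
    (hPconv : Convex ℝ P) (hPcomp : IsCompact P) (hPne : (interior P).Nonempty)
    (F : Set (EuclideanSpace ℝ (Fin 3)))
    (hFP : F ⊆ P)
    (hFplane : ∀ y ∈ F, y 2 = 0)
    (l : ℝ) (hl : 0 ≤ l)
    (hheight : ∀ x ∈ P, 0 ≤ x 2 ∧ x 2 ≤ l)
    (hproj : ∀ x ∈ P, ∃ y ∈ F, y 0 = x 0 ∧ y 1 = x 1)
    (u : EuclideanSpace ℝ (Fin 3) → ℝ)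
    (hu : ContDiff ℝ 1 u) :
    (∫ x in P, (u x) ^ 2)
      ≤ 2 * l * (∫ y in F, (u y) ^ 2 ∂(μH[2])) +
        2 * l ^ 2 * ∫ x in P, ‖fderiv ℝ u x‖ ^ 2 := by
  classical
  have hPclosed : IsClosed P := hPcomp.isClosed
  have hPmeas : MeasurableSet P := hPclosed.measurableSet
  have hucont : Continuous u := hu.continuous
  have hfd : Continuous (fderiv ℝ u) := hu.continuous_fderiv one_ne_zero
  set v : EuclideanSpace ℝ (Fin 3) := EuclideanSpace.single 2 (1:ℝ) with hv
  have hvnorm : ‖v‖ = 1 := by rw [hv, EuclideanSpace.norm_single]; simp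
  set du : EuclideanSpace ℝ (Fin 3) → ℝ := fun x => fderiv ℝ u x v with hdu
  have hducont : Continuous du := hfd.clm_apply continuous_const
  set f1 : EuclideanSpace ℝ (Fin 3) → ℝ≥0∞ := fun x => ENNReal.ofReal (u x ^ 2) with hf1def
  set f2 : EuclideanSpace ℝ (Fin 3) → ℝ≥0∞ := fun x => ENNReal.ofReal (du x ^ 2) with hf2def
  set f3 : EuclideanSpace ℝ (Fin 3) → ℝ≥0∞ :=
    fun x => ENNReal.ofReal (‖fderiv ℝ u x‖ ^ 2) with hf3def
  have hf1m : Measurable f1 := ENNReal.measurable_ofReal.comp (hucont.pow 2).measurable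
  have hf2m : Measurable f2 := ENNReal.measurable_ofReal.comp (hducont.pow 2).measurable
  have hf3m : Measurable f3 := ENNReal.measurable_ofReal.comp ((hfd.norm.pow 2)).measurable
  -- continuity of Qpt
  have hQcont : Continuous (fun p : ℝ × (Fin 2 → ℝ) => Qpt p.2 p.1) := by
    apply (PiLp.continuous_toLp 2 (fun _ : Fin 3 => ℝ)).comp
    apply continuous_pi
    intro i
    fin_cases i
    · exact (continuous_apply (0 : Fin 2)).comp continuous_snd
    · exact (continuous_apply (1 : Fin 2)).comp continuous_snd
    · exact continuous_fst
  have hQzcont : ∀ z : Fin 2 → ℝ, Continuous fun t : ℝ => Qpt z t := fun z =>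
    hQcont.comp (continuous_id.prodMk continuous_const)
  have hQ0cont : Continuous fun z : Fin 2 → ℝ => Qpt z 0 :=
    hQcont.comp (continuous_const.prodMk continuous_id)
  have hQmeas : Measurable (fun p : ℝ × (Fin 2 → ℝ) => Qpt p.2 p.1) := hQcont.measurable
  -- face points below slices
  have hface : ∀ (z : Fin 2 → ℝ) (t : ℝ), Qpt z t ∈ P → Qpt z 0 ∈ F := by
    intro z t hx
    obtain ⟨y, hyF, hy0, hy1⟩ := hproj _ hx
    have hy2 := hFplane y hyF
    have hyy : y = Qpt z 0 := by
      ext i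
      fin_cases i
      · simpa using hy0
      · simpa using hy1
      · simpa using hy2
    rwa [hyy] at hyF
  -- slices
  set S : (Fin 2 → ℝ) → Set ℝ := fun z => {t : ℝ | Qpt z t ∈ P} with hSdef
  set G : Set (Fin 2 → ℝ) := {z | Qpt z 0 ∈ P} with hGdef
  have hGmeas : MeasurableSet G := (hPclosed.preimage hQ0cont).measurableSet
  have hSclosed : ∀ z, IsClosed (S z) := fun z => hPclosed.preimage (hQzcont z)
  have hSsub : ∀ z, S z ⊆ Set.Icc 0 l := by
    intro z t ht
    have h := hheight (Qpt z t) ht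
    constructor
    · simpa using h.1
    · simpa using h.2
  have hScompact : ∀ z, IsCompact (S z) := fun z =>
    IsCompact.of_isClosed_subset isCompact_Icc (hSclosed z) (hSsub z)
  have hSmeas : ∀ z, MeasurableSet (S z) := fun z => (hSclosed z).measurableSet
  have hIcc : ∀ z t, t ∈ S z → Set.Icc (0:ℝ) t ⊆ S z := by
    intro z t ht s hs
    have h0 : Qpt z 0 ∈ P := hFP (hface z t ht)
    rcases eq_or_lt_of_le hs.1 with h | h
    · show Qpt z s ∈ P
      rw [← h]; exact h0
    · have htpos : 0 < t := lt_of_lt_of_le h hs.2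
      have ha : 0 ≤ (t - s) / t := div_nonneg (by linarith [hs.2]) htpos.le
      have hb : 0 ≤ s / t := div_nonneg (by linarith) htpos.le
      have hab : (t - s) / t + s / t = 1 := by field_simp; ring
      have hmem := hPconv h0 ht ha hb hab
      have hcombo : ((t - s) / t) • Qpt z 0 + (s / t) • Qpt z t = Qpt z s := by
        rw [Qpt_combo _ _ _ _ _ hab]
        congr 1
        field_simp
        ring
      show Qpt z s ∈ P
      rwa [hcombo] at hmem
  -- indicator rewriting
  have hind : ∀ (k : EuclideanSpace ℝ (Fin 3) → ℝ≥0∞) (z : Fin 2 → ℝ) (t : ℝ),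
      P.indicator k (Qpt z t) = (S z).indicator (fun s => k (Qpt z s)) t := by
    intro k z t
    by_cases h : Qpt z t ∈ P
    · rw [Set.indicator_of_mem h, Set.indicator_of_mem (show t ∈ S z from h)]
    · rw [Set.indicator_of_notMem h, Set.indicator_of_notMem (show t ∉ S z from h)]
  -- Fubini master identity
  have fub : ∀ k : EuclideanSpace ℝ (Fin 3) → ℝ≥0∞, Measurable k →
      ∫⁻ x, k x = ∫⁻ z, ∫⁻ t, k (Qpt z t) ∂volume ∂volume := by
    intro k hk
    rw [← (Phi3_measurePreserving.symm _).lintegral_comp hk]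
    rw [Measure.volume_eq_prod, lintegral_prod_symm (fun a : ℝ × (Fin 2 → ℝ) => k (Phi3.symm a))
      ((hk.comp Phi3.symm.measurable).aemeasurable)]
    simp_rw [Phi3_symm_apply]
  -- the slice estimate
  have hslice : ∀ z : Fin 2 → ℝ,
      (∫⁻ t, P.indicator f1 (Qpt z t) ∂volume)
        ≤ G.indicator (fun z => ENNReal.ofReal (2 * l * u (Qpt z 0) ^ 2)) z
          + ENNReal.ofReal (2 * l ^ 2) * ∫⁻ t, P.indicator f2 (Qpt z t) ∂volume := by
    intro z
    by_cases hzG : z ∈ G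
    · -- main case
      have h0S : (0:ℝ) ∈ S z := hzG
      set g : ℝ → ℝ := fun t => u (Qpt z t) with hg
      set dg : ℝ → ℝ := fun t => du (Qpt z t) with hdgdef
      have hgc : Continuous g := hucont.comp (hQzcont z)
      have hdgc : Continuous dg := hducont.comp (hQzcont z)
      have hderiv : ∀ t : ℝ, HasDerivAt g (dg t) t := by
        intro t
        have h2 : HasDerivAt (fun s : ℝ => Qpt z s) v t := by
          have he : (fun s : ℝ => Qpt z s) = fun s => Qpt z 0 + s • v := by
            funext s
            ext i
            fin_cases i <;>
              simp [hv, PiLp.add_apply, PiLp.smul_apply, EuclideanSpace.single_apply,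
                smul_eq_mul]
          rw [he]
          simpa using (HasDerivAt.smul_const (hasDerivAt_id t) v).const_add (Qpt z 0)
        have h1 := (hu.differentiable one_ne_zero (Qpt z t)).hasFDerivAt
        have := h1.comp_hasDerivAt t h2
        exact this
      set A : ℝ := ∫ s in S z, dg s ^ 2 ∂volume with hA
      have hAnn : 0 ≤ A := setIntegral_nonneg (hSmeas z) (fun s _ => sq_nonneg _)
      have hIntdg2 : IntegrableOn (fun s => dg s ^ 2) (S z) volume :=
        ((hdgc.pow 2).continuousOn).integrableOn_compact (hScompact z)
      have hptwise : ∀ t ∈ S z, g t ^ 2 ≤ 2 * g 0 ^ 2 + 2 * l * A := by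
        intro t ht
        have ht0 : 0 ≤ t := (hSsub z ht).1
        have htl : t ≤ l := (hSsub z ht).2
        have hCS := cs_aux dg hdgc t ht0
        have hIle : ∫ s in (0:ℝ)..t, dg s ^ 2 ≤ A := by
          rw [intervalIntegral.integral_of_le ht0, hA]
          exact setIntegral_mono_set hIntdg2 (Filter.Eventually.of_forall fun s => sq_nonneg _)
            (HasSubset.Subset.eventuallyLE (subset_trans Set.Ioc_subset_Icc_self (hIcc z t ht)))
        have hftc : ∫ s in (0:ℝ)..t, dg s = g t - g 0 :=
          intervalIntegral.integral_eq_sub_of_hasDerivAt (fun s _ => hderiv s)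
            (hdgc.intervalIntegrable _ _)
        have hInn : 0 ≤ ∫ s in (0:ℝ)..t, dg s ^ 2 :=
          intervalIntegral.integral_nonneg ht0 (fun s _ => sq_nonneg _)
        rw [hftc] at hCS
        nlinarith [hCS, hIle, hftc, sq_nonneg (g 0 - (g t - g 0)),
          mul_nonneg (sub_nonneg.2 htl) hInn, mul_nonneg hl (sub_nonneg.2 hIle)]
      have hmono_ind : ∀ t : ℝ, (S z).indicator (fun s => f1 (Qpt z s)) t
          ≤ (S z).indicator (fun _ => ENNReal.ofReal (2 * g 0 ^ 2 + 2 * l * A)) t := by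
        intro t
        by_cases ht : t ∈ S z
        · rw [Set.indicator_of_mem ht, Set.indicator_of_mem ht]
          exact ENNReal.ofReal_le_ofReal (hptwise t ht)
        · rw [Set.indicator_of_notMem ht, Set.indicator_of_notMem ht]
      have hvolS : volume (S z) ≤ ENNReal.ofReal l := by
        calc volume (S z) ≤ volume (Set.Icc (0:ℝ) l) := measure_mono (hSsub z)
          _ = ENNReal.ofReal l := by rw [Real.volume_Icc]; simp
      have hofRealA : ENNReal.ofReal A = ∫⁻ t, (S z).indicator (fun s => f2 (Qpt z s)) t ∂volume := by
        rw [hA, ofReal_integral_eq_lintegral_ofReal hIntdg2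
          (Filter.Eventually.of_forall fun s => sq_nonneg _), lintegral_indicator (hSmeas z)]
      calc ∫⁻ t, P.indicator f1 (Qpt z t) ∂volume
          = ∫⁻ t, (S z).indicator (fun s => f1 (Qpt z s)) t ∂volume := by simp_rw [hind]
        _ ≤ ∫⁻ t, (S z).indicator (fun _ => ENNReal.ofReal (2 * g 0 ^ 2 + 2 * l * A)) t ∂volume :=
            lintegral_mono hmono_ind
        _ = ENNReal.ofReal (2 * g 0 ^ 2 + 2 * l * A) * volume (S z) :=
            lintegral_indicator_const (hSmeas z) _
        _ ≤ ENNReal.ofReal (2 * g 0 ^ 2 + 2 * l * A) * ENNReal.ofReal l :=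
            mul_le_mul_right hvolS _
        _ = ENNReal.ofReal (l * (2 * g 0 ^ 2 + 2 * l * A)) := by
            rw [mul_comm, ← ENNReal.ofReal_mul hl]
        _ = ENNReal.ofReal (2 * l * g 0 ^ 2 + 2 * l ^ 2 * A) := by
            rw [show l * (2 * g 0 ^ 2 + 2 * l * A) = 2 * l * g 0 ^ 2 + 2 * l ^ 2 * A by ring]
        _ ≤ ENNReal.ofReal (2 * l * g 0 ^ 2) + ENNReal.ofReal (2 * l ^ 2 * A) :=
            ENNReal.ofReal_add_le
        _ = G.indicator (fun z => ENNReal.ofReal (2 * l * u (Qpt z 0) ^ 2)) z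
            + ENNReal.ofReal (2 * l ^ 2) * ∫⁻ t, P.indicator f2 (Qpt z t) ∂volume := by
            rw [Set.indicator_of_mem hzG]
            congr 1
            rw [ENNReal.ofReal_mul (by positivity : (0:ℝ) ≤ 2 * l ^ 2), hofRealA]
            exact congrArg (fun x => ENNReal.ofReal (2 * l ^ 2) * x)
              (lintegral_congr fun t => (hind f2 z t).symm)
    · -- empty slice case
      have hSempty : S z = ∅ := by
        ext t
        simp only [Set.mem_empty_iff_false, iff_false]
        intro ht
        exact hzG (hFP (hface z t ht))
      calc ∫⁻ t, P.indicator f1 (Qpt z t) ∂volume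
          = ∫⁻ t, (S z).indicator (fun s => f1 (Qpt z s)) t ∂volume := by simp_rw [hind]
        _ = 0 := by rw [hSempty]; simp
        _ ≤ _ := zero_le
  -- measurability for the outer integral
  have hk1 : Measurable (P.indicator f1) := hf1m.indicator hPmeas
  have hk2 : Measurable (P.indicator f2) := hf2m.indicator hPmeas
  have hinner2meas : Measurable fun z : Fin 2 → ℝ => ∫⁻ t, P.indicator f2 (Qpt z t) ∂volume := by
    have hm : Measurable fun q : (Fin 2 → ℝ) × ℝ => P.indicator f2 (Qpt q.1 q.2) :=
      hk2.comp (hQmeas.comp measurable_swap)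
    exact hm.lintegral_prod_right'
  have hGindmeas : Measurable (G.indicator fun z => ENNReal.ofReal (2 * l * u (Qpt z 0) ^ 2)) := by
    apply Measurable.indicator _ hGmeas
    exact ENNReal.measurable_ofReal.comp
      ((continuous_const.mul ((hucont.comp hQ0cont).pow 2)).measurable)
  -- main ENNReal estimate
  have main : (∫⁻ x in P, f1 x ∂volume)
      ≤ ENNReal.ofReal (2 * l) * (∫⁻ y in F, f1 y ∂(μH[2]))
        + ENNReal.ofReal (2 * l ^ 2) * ∫⁻ x in P, f3 x ∂volume := by
    have step0 : ∫⁻ x in P, f1 x ∂volume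
        = ∫⁻ z, ∫⁻ t, P.indicator f1 (Qpt z t) ∂volume ∂volume := by
      rw [← lintegral_indicator hPmeas]
      exact fub _ hk1
    have step1 : (∫⁻ z, ∫⁻ t, P.indicator f1 (Qpt z t) ∂volume ∂volume)
        ≤ ∫⁻ z, (G.indicator (fun z => ENNReal.ofReal (2 * l * u (Qpt z 0) ^ 2)) z
            + ENNReal.ofReal (2 * l ^ 2) * ∫⁻ t, P.indicator f2 (Qpt z t) ∂volume) ∂volume :=
      lintegral_mono hslice
    have step2 : (∫⁻ z, (G.indicator (fun z => ENNReal.ofReal (2 * l * u (Qpt z 0) ^ 2)) z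
            + ENNReal.ofReal (2 * l ^ 2) * ∫⁻ t, P.indicator f2 (Qpt z t) ∂volume) ∂volume)
        = (∫⁻ z, G.indicator (fun z => ENNReal.ofReal (2 * l * u (Qpt z 0) ^ 2)) z ∂volume)
          + ENNReal.ofReal (2 * l ^ 2)
            * ∫⁻ z, ∫⁻ t, P.indicator f2 (Qpt z t) ∂volume ∂volume := by
      rw [lintegral_add_left hGindmeas, lintegral_const_mul _ hinner2meas]
    have face1 : (∫⁻ z, G.indicator (fun z => ENNReal.ofReal (2 * l * u (Qpt z 0) ^ 2)) z ∂volume)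
        = ENNReal.ofReal (2 * l) * ∫⁻ z in G, f1 (Qpt z 0) ∂volume := by
      rw [lintegral_indicator hGmeas, ← lintegral_const_mul _
        (show Measurable fun z : Fin 2 → ℝ => f1 (Qpt z 0) from hf1m.comp hQ0cont.measurable)]
      apply lintegral_congr
      intro z
      rw [hf1def, ← ENNReal.ofReal_mul (by linarith : (0:ℝ) ≤ 2 * l)]
    have face2 : (∫⁻ z in G, f1 (Qpt z 0) ∂volume) ≤ ∫⁻ y in F, f1 y ∂(μH[2]) :=
      face_chain G F f1 hf1m (fun z hz => hface z 0 hz)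
    have grad1 : (∫⁻ z, ∫⁻ t, P.indicator f2 (Qpt z t) ∂volume ∂volume)
        = ∫⁻ x in P, f2 x ∂volume := by
      rw [← fub _ hk2, lintegral_indicator hPmeas]
    have grad2 : (∫⁻ x in P, f2 x ∂volume) ≤ ∫⁻ x in P, f3 x ∂volume := by
      apply lintegral_mono
      intro x
      apply ENNReal.ofReal_le_ofReal
      have habs : |du x| ≤ ‖fderiv ℝ u x‖ := by
        have := (fderiv ℝ u x).le_opNorm v
        rw [hvnorm, mul_one] at this
        simpa [hdu] using this
      calc du x ^ 2 = |du x| ^ 2 := (sq_abs _).symm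
        _ ≤ ‖fderiv ℝ u x‖ ^ 2 := by
            apply pow_le_pow_left₀ (abs_nonneg _) habs
    calc ∫⁻ x in P, f1 x ∂volume
        = _ := step0
      _ ≤ _ := step1
      _ = _ := step2
      _ ≤ ENNReal.ofReal (2 * l) * (∫⁻ y in F, f1 y ∂(μH[2]))
          + ENNReal.ofReal (2 * l ^ 2) * ∫⁻ x in P, f3 x ∂volume := by
          rw [face1, grad1]
          exact add_le_add (mul_le_mul_right face2 _) (mul_le_mul_right grad2 _)
  -- boundedness constants
  obtain ⟨Cu, hCu⟩ := hPcomp.exists_bound_of_continuousOn ((hucont.pow 2).continuousOn)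
  obtain ⟨Cg, hCg⟩ := hPcomp.exists_bound_of_continuousOn ((hfd.norm.pow 2).continuousOn)
  -- finiteness of the face integral
  have hFrange : F ⊆ Set.range psie := by
    intro y hy
    refine ⟨(WithLp.equiv 2 (Fin 2 → ℝ)).symm ![y 0, y 1], ?_⟩
    ext i
    fin_cases i
    · simp
    · simp
    · simp [hFplane y hy]
  have hBbd : Bornology.IsBounded (psie ⁻¹' F) := by
    obtain ⟨r, hr⟩ := hPcomp.isBounded.subset_closedBall (psie 0)
    refine (Metric.isBounded_closedBall (x := (0 : EuclideanSpace ℝ (Fin 2))) (r := r)).subset ?_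
    intro w hw
    have hmem : psie w ∈ Metric.closedBall (psie 0) r := hr (hFP hw)
    rw [Metric.mem_closedBall] at hmem ⊢
    rw [← psie_isometry.dist_eq]
    exact hmem
  have hμF_fin : μH[(2:ℝ)] F < ⊤ := by
    have him : psie '' (psie ⁻¹' F) = F := Set.image_preimage_eq_of_subset hFrange
    calc μH[(2:ℝ)] F = μH[(2:ℝ)] (psie '' (psie ⁻¹' F)) := by rw [him]
      _ = μH[(2:ℝ)] (psie ⁻¹' F) :=
          psie_isometry.hausdorffMeasure_image (Or.inl (by norm_num)) _
      _ < ⊤ := hausdorff2_lt_top_of_bounded _ hBbd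
  have hLF_fin : (∫⁻ y in F, f1 y ∂(μH[2])) ≠ ⊤ := by
    set T := toMeasurable (μH[(2:ℝ)] : Measure (EuclideanSpace ℝ (Fin 3))) F ∩ P with hT
    have hFT : F ⊆ T := Set.subset_inter (subset_toMeasurable _ _) hFP
    have hTμ : μH[(2:ℝ)] T ≤ μH[(2:ℝ)] F := by
      calc μH[(2:ℝ)] T ≤ μH[(2:ℝ)] (toMeasurable (μH[(2:ℝ)] :
            Measure (EuclideanSpace ℝ (Fin 3))) F) := measure_mono Set.inter_subset_left
        _ = μH[(2:ℝ)] F := measure_toMeasurable F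
    have h1 : (∫⁻ y in F, f1 y ∂(μH[2])) ≤ ∫⁻ y in T, f1 y ∂(μH[2]) :=
      lintegral_mono' (Measure.restrict_mono hFT le_rfl) le_rfl
    have h2 : (∫⁻ y in T, f1 y ∂(μH[2])) ≤ ENNReal.ofReal Cu * μH[(2:ℝ)] T := by
      calc (∫⁻ y in T, f1 y ∂(μH[2])) ≤ ∫⁻ _ in T, ENNReal.ofReal Cu ∂(μH[2]) := by
            apply setLIntegral_mono measurable_const
            intro x hx
            exact ENNReal.ofReal_le_ofReal ((le_abs_self _).trans (by simpa using hCu x hx.2))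
        _ = ENNReal.ofReal Cu * μH[(2:ℝ)] T := by
            rw [setLIntegral_const]
      -- done
    have h3 : ENNReal.ofReal Cu * μH[(2:ℝ)] T < ⊤ :=
      ENNReal.mul_lt_top ENNReal.ofReal_lt_top (lt_of_le_of_lt hTμ hμF_fin)
    exact (lt_of_le_of_lt (h1.trans h2) h3).ne
  have hLG_fin : (∫⁻ x in P, f3 x ∂volume) ≠ ⊤ := by
    have h2 : (∫⁻ x in P, f3 x ∂volume) ≤ ENNReal.ofReal Cg * volume P := by
      calc (∫⁻ x in P, f3 x ∂volume) ≤ ∫⁻ _ in P, ENNReal.ofReal Cg ∂volume := by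
            apply setLIntegral_mono measurable_const
            intro x hx
            exact ENNReal.ofReal_le_ofReal ((le_abs_self _).trans (by simpa using hCg x hx))
        _ = ENNReal.ofReal Cg * volume P := by rw [setLIntegral_const]
    exact (lt_of_le_of_lt h2 (ENNReal.mul_lt_top ENNReal.ofReal_lt_top
      hPcomp.measure_lt_top)).ne
  -- convert to real integrals
  have e1 : (∫ x in P, u x ^ 2) = (∫⁻ x in P, f1 x ∂volume).toReal := by
    rw [integral_eq_lintegral_of_nonneg_ae (Filter.Eventually.of_forall fun x => sq_nonneg _)
      ((hucont.pow 2).aestronglyMeasurable)]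
  have eF : (∫ y in F, u y ^ 2 ∂(μH[2])) = (∫⁻ y in F, f1 y ∂(μH[2])).toReal := by
    rw [integral_eq_lintegral_of_nonneg_ae (Filter.Eventually.of_forall fun x => sq_nonneg _)
      ((hucont.pow 2).aestronglyMeasurable)]
  have eG : (∫ x in P, ‖fderiv ℝ u x‖ ^ 2) = (∫⁻ x in P, f3 x ∂volume).toReal := by
    rw [integral_eq_lintegral_of_nonneg_ae (Filter.Eventually.of_forall fun x => sq_nonneg _)
      ((hfd.norm.pow 2).aestronglyMeasurable)]
  rw [e1, eF, eG]
  have hRHS_ne : ENNReal.ofReal (2 * l) * (∫⁻ y in F, f1 y ∂(μH[2]))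
      + ENNReal.ofReal (2 * l ^ 2) * (∫⁻ x in P, f3 x ∂volume) ≠ ⊤ := by
    apply ENNReal.add_ne_top.2
    constructor
    · exact ENNReal.mul_ne_top ENNReal.ofReal_ne_top hLF_fin
    · exact ENNReal.mul_ne_top ENNReal.ofReal_ne_top hLG_fin
  have hfinal := ENNReal.toReal_mono hRHS_ne main
  rw [ENNReal.toReal_add (ENNReal.mul_ne_top ENNReal.ofReal_ne_top hLF_fin)
    (ENNReal.mul_ne_top ENNReal.ofReal_ne_top hLG_fin), ENNReal.toReal_mul,
    ENNReal.toReal_mul, ENNReal.toReal_ofReal (by linarith : (0:ℝ) ≤ 2 * l),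
    ENNReal.toReal_ofReal (by positivity : (0:ℝ) ≤ 2 * l ^ 2)] at hfinal
  exact hfinal
end

section
/- (Gradient control by tangential edge derivatives) Let T be a triangle with edges e₁, e₂, e₃, unit tangent vectors t_i, circumradius R_T, and maximum angle θ_M. Then for every affine v on T, ‖∇v‖²_{L²(T)} = R_T Σ_{i=1}^{3} cos(θ_i) ‖∇v · t_i‖²_{L²(e_i)} (cotangent formula), and consequently, using R_T ≤ h_T/(2 sin θ_M), ‖∇v‖_{L²(T)} ≤ (h_T)^{1/2}/√(2 sin θ_M) Σ_{i=1}^{3} ‖∇v · t_i‖_{L²(e_i)}. -/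
open EuclideanGeometry Real MeasureTheory
open scoped RealInnerProductSpace

open scoped Pointwise
noncomputable section AuxStmt10
abbrev E2 := EuclideanSpace ℝ (Fin 2)

def T1 : Set E2 := {x | 0 ≤ x 0 ∧ 0 ≤ x 1 ∧ x 0 + x 1 ≤ 1}
def T2 : Set E2 := {x | x 0 ≤ 1 ∧ x 1 ≤ 1 ∧ 1 ≤ x 0 + x 1}
def Sq : Set E2 := {x | (0 ≤ x 0 ∧ x 0 ≤ 1) ∧ (0 ≤ x 1 ∧ x 1 ≤ 1)}

lemma contApply (i : Fin 2) : Continuous fun x : E2 => x i :=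
  (continuous_apply i).comp (PiLp.continuous_ofLp 2 fun _ : Fin 2 => ℝ)

lemma measT1 : MeasurableSet T1 := by
  have h0 := contApply 0
  have h1 := contApply 1
  exact (((isClosed_le continuous_const h0).inter
    ((isClosed_le continuous_const h1).inter
      (isClosed_le (h0.add h1) continuous_const))).measurableSet).congr rfl

lemma volSq : volume Sq = 1 := by
  have hmp := EuclideanSpace.volume_preserving_symm_measurableEquiv_toLp (Fin 2)
  have hset : Sq = (MeasurableEquiv.toLp 2 (Fin 2 → ℝ)).symm ⁻¹' (Set.pi Set.univ fun _ => Set.Icc (0:ℝ) 1) := by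
    ext x
    simp only [Sq, Set.mem_preimage, Set.mem_pi, Set.mem_univ, forall_true_left, Set.mem_Icc,
      Fin.forall_fin_two]
    exact Iff.rfl
  rw [hset, hmp.measure_preimage ((MeasurableSet.univ_pi fun _ => measurableSet_Icc).nullMeasurableSet)]
  rw [volume_pi_pi]
  simp [Real.volume_Icc]

def e0 : E2 := EuclideanSpace.single 0 1
def e1 : E2 := EuclideanSpace.single 1 1

lemma e0_apply : e0 0 = 1 ∧ e0 1 = 0 := by
  constructor <;> simp [e0, EuclideanSpace.single_apply]
lemma e1_apply : e1 0 = 0 ∧ e1 1 = 1 := by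
  constructor <;> simp [e1, EuclideanSpace.single_apply]

def Lswap : E2 →ₗ[ℝ] E2 where
  toFun x := (-(x 1)) • e0 + (-(x 0)) • e1
  map_add' x y := by
    have hx : ∀ i, (x + y) i = x i + y i := fun i => rfl
    simp [hx]; module
  map_smul' c x := by
    have hx : ∀ i, (c • x) i = c * x i := fun i => rfl
    simp [hx]; module

lemma Lswap_apply (x : E2) : (Lswap x) 0 = -(x 1) ∧ (Lswap x) 1 = -(x 0) := by
  have h : ∀ (a b : E2) (i : Fin 2), (a + b) i = a i + b i := fun _ _ _ => rfl
  have h2 : ∀ (c : ℝ) (a : E2) (i : Fin 2), (c • a) i = c * a i := fun _ _ _ => rfl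
  constructor <;>
    simp [Lswap, h, h2, e0_apply.1, e0_apply.2, e1_apply.1, e1_apply.2]

lemma det_E2 (M : E2 →ₗ[ℝ] E2) :
    LinearMap.det M = (M e0) 0 * (M e1) 1 - (M e1) 0 * (M e0) 1 := by
  classical
  let b := (EuclideanSpace.basisFun (Fin 2) ℝ).toBasis
  rw [← LinearMap.det_toMatrix b, Matrix.det_fin_two]
  have hb : ∀ i, b i = EuclideanSpace.single i 1 := fun i => by
    simp [b, EuclideanSpace.basisFun_apply]
  have hrepr : ∀ (x : E2) (i : Fin 2), b.repr x i = x i := fun x i => by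
    simp [b]
  simp [LinearMap.toMatrix_apply, hrepr, hb, e0, e1]

def refl2 : E2 → E2 := fun x => (e0 + e1) + Lswap x

lemma refl2_apply (x : E2) : (refl2 x) 0 = 1 - x 1 ∧ (refl2 x) 1 = 1 - x 0 := by
  have h : ∀ (a b : E2) (i : Fin 2), (a + b) i = a i + b i := fun _ _ _ => rfl
  constructor <;>
    simp [refl2, h, Lswap_apply x, e0_apply.1, e0_apply.2, e1_apply.1, e1_apply.2] <;> ring

lemma refl2_invol (x : E2) : refl2 (refl2 x) = x := by
  ext i
  fin_cases i
  · show (refl2 (refl2 x)) 0 = x 0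
    rw [(refl2_apply _).1, (refl2_apply _).2]; ring
  · show (refl2 (refl2 x)) 1 = x 1
    rw [(refl2_apply _).2, (refl2_apply _).1]; ring

lemma T2_eq : T2 = refl2 '' T1 := by
  ext y
  constructor
  · rintro ⟨h1, h2, h3⟩
    refine ⟨refl2 y, ⟨?_, ?_, ?_⟩, refl2_invol y⟩
    · rw [(refl2_apply _).1]; linarith
    · rw [(refl2_apply _).2]; linarith
    · rw [(refl2_apply _).1, (refl2_apply _).2]; linarith
  · rintro ⟨x, ⟨h1, h2, h3⟩, rfl⟩
    refine ⟨?_, ?_, ?_⟩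
    · rw [(refl2_apply _).1]; linarith
    · rw [(refl2_apply _).2]; linarith
    · rw [(refl2_apply _).1, (refl2_apply _).2]; linarith

lemma vol_refl2_image (s : Set E2) : volume (refl2 '' s) = volume s := by
  have : refl2 '' s = (e0 + e1) +ᵥ (Lswap '' s) := by
    ext y
    simp only [refl2, Set.mem_vadd_set, vadd_eq_add, Set.mem_image]
    constructor
    · rintro ⟨x, hx, rfl⟩; exact ⟨Lswap x, ⟨x, hx, rfl⟩, rfl⟩
    · rintro ⟨z, ⟨x, hx, rfl⟩, rfl⟩; exact ⟨x, hx, rfl⟩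
  rw [this, measure_vadd, Measure.addHaar_image_linearMap]
  have hdet : LinearMap.det Lswap = -1 := by
    rw [det_E2]
    rcases Lswap_apply e0 with ⟨ha, hb⟩
    rcases Lswap_apply e1 with ⟨hc, hd⟩
    rw [ha, hb, hc, hd, e0_apply.1, e0_apply.2, e1_apply.1, e1_apply.2]; ring
  simp [hdet]

def φd : E2 →ₗ[ℝ] ℝ where
  toFun x := x 0 + x 1
  map_add' x y := by
    have hx : ∀ i, (x + y) i = x i + y i := fun i => rfl
    simp [hx]; ring
  map_smul' c x := by
    have hx : ∀ i, (c • x) i = c * x i := fun i => rfl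
    simp [hx]; ring

lemma vol_diag : volume {x : E2 | x 0 + x 1 = 1} = 0 := by
  have hK : volume {x : E2 | x 0 + x 1 = 0} = 0 := by
    have : {x : E2 | x 0 + x 1 = 0} = (LinearMap.ker φd : Set E2) := by
      ext x; simp [LinearMap.mem_ker, φd]
    rw [this]
    refine Measure.addHaar_submodule _ _ ?_
    intro h
    have : e0 ∈ LinearMap.ker φd := h ▸ Submodule.mem_top
    simp [LinearMap.mem_ker, φd, e0_apply.1, e0_apply.2] at this
  have : {x : E2 | x 0 + x 1 = 1} = e0 +ᵥ {x : E2 | x 0 + x 1 = 0} := by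
    ext y
    simp only [Set.mem_vadd_set, vadd_eq_add, Set.mem_setOf_eq]
    constructor
    · intro hy
      refine ⟨y - e0, ?_, by abel⟩
      have h : ∀ (a b : E2) (i : Fin 2), (a - b) i = a i - b i := fun _ _ _ => rfl
      rw [h, h, e0_apply.1, e0_apply.2]; linarith
    · rintro ⟨z, hz, rfl⟩
      have h : ∀ (a b : E2) (i : Fin 2), (a + b) i = a i + b i := fun _ _ _ => rfl
      rw [h, h, e0_apply.1, e0_apply.2]; linarith
  rw [this, measure_vadd, hK]

lemma vol_T1 : volume T1 = ENNReal.ofReal (1/2) := by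
  have hsplit : volume (T2 ∪ T1) + volume (T2 ∩ T1) = volume T2 + volume T1 :=
    measure_union_add_inter T2 measT1
  have hUnion : T2 ∪ T1 = Sq := by
    ext x
    simp only [T1, T2, Sq, Set.mem_union, Set.mem_setOf_eq, or_comm]
    constructor
    · rintro (⟨h1, h2, h3⟩ | ⟨h1, h2, h3⟩) <;> exact ⟨⟨by linarith, by linarith⟩, by linarith, by linarith⟩
    · rintro ⟨⟨h1, h2⟩, h3, h4⟩
      rcases le_total (x 0 + x 1) 1 with h | h
      · exact Or.inr ⟨h1, h3, h⟩
      · exact Or.inl ⟨h2, h4, h⟩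
  have hInter : volume (T2 ∩ T1) = 0 := by
    refine measure_mono_null ?_ vol_diag
    rintro x ⟨⟨_, _, h6⟩, _, _, h3⟩
    exact le_antisymm h3 h6
  have hT2 : volume T2 = volume T1 := by rw [T2_eq, vol_refl2_image]
  rw [hT2, hUnion, hInter, volSq, add_zero] at hsplit
  have hfin : volume T1 ≠ ⊤ := by
    intro h
    rw [h] at hsplit
    simp at hsplit
  have := congrArg ENNReal.toReal hsplit
  rw [ENNReal.toReal_add hfin hfin, ENNReal.toReal_one] at this
  have hval : (volume T1).toReal = 1/2 := by linarith
  rw [← hval, ENNReal.ofReal_toReal hfin]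

lemma T1_hull : T1 = convexHull ℝ ({0, e0, e1} : Set E2) := by
  apply le_antisymm
  · -- T1 ⊆ hull
    intro x hx
    obtain ⟨h0, h1, hs⟩ := hx
    have key : x = Finset.centerMass (Finset.univ : Finset (Fin 3))
        ![1 - x 0 - x 1, x 0, x 1] ![0, e0, e1] := by
      rw [Finset.centerMass]
      have hsum : (∑ i, (![1 - x 0 - x 1, x 0, x 1] : Fin 3 → ℝ) i) = 1 := by
        simp [Fin.sum_univ_three]; ring
      rw [hsum]
      ext i
      have hh : ∀ (a b : E2) (i : Fin 2), (a + b) i = a i + b i := fun _ _ _ => rfl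
      have h2 : ∀ (c : ℝ) (a : E2) (i : Fin 2), (c • a) i = c * a i := fun _ _ _ => rfl
      fin_cases i <;>
        simp [Fin.sum_univ_three, hh, h2, e0_apply.1, e0_apply.2, e1_apply.1, e1_apply.2,
          show ((0:E2) 0 = 0) from rfl, show ((0:E2) 1 = 0) from rfl]
    rw [key]
    refine Finset.centerMass_mem_convexHull _ ?_ ?_ ?_
    · intro i _
      fin_cases i <;> simp <;> linarith
    · rw [show (∑ i ∈ Finset.univ, (![1 - x 0 - x 1, x 0, x 1] : Fin 3 → ℝ) i) = 1 by
        simp [Fin.sum_univ_three]; ring]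
      norm_num
    · intro i _
      fin_cases i <;> simp
  · -- hull ⊆ T1
    apply convexHull_min
    · rintro y (rfl | rfl | rfl)
      · exact ⟨le_refl 0, le_refl 0, by norm_num⟩
      · exact ⟨by rw [e0_apply.1]; norm_num, by rw [e0_apply.2], by rw [e0_apply.1, e0_apply.2]; norm_num⟩
      · exact ⟨by rw [e1_apply.1], by rw [e1_apply.2]; norm_num, by rw [e1_apply.1, e1_apply.2]; norm_num⟩
    · have hlin0 : IsLinearMap ℝ fun x : E2 => x 0 := ⟨fun _ _ => rfl, fun _ _ => rfl⟩
      have hlin1 : IsLinearMap ℝ fun x : E2 => x 1 := ⟨fun _ _ => rfl, fun _ _ => rfl⟩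
      have hlins : IsLinearMap ℝ fun x : E2 => x 0 + x 1 :=
        ⟨fun a b => by show (a+b) 0 + (a+b) 1 = _; show a 0 + b 0 + (a 1 + b 1) = _; ring,
         fun c a => by show (c•a) 0 + (c•a) 1 = _; show c * a 0 + c * a 1 = _; simp; ring⟩
      have hc := (convex_halfSpace_ge hlin0 0).inter
        ((convex_halfSpace_ge hlin1 0).inter (convex_halfSpace_le hlins 1))
      have heq : ({w : E2 | 0 ≤ w 0} ∩ ({w : E2 | 0 ≤ w 1} ∩ {w : E2 | w 0 + w 1 ≤ 1})) = T1 := by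
        ext x; exact Iff.rfl
      rw [heq] at hc
      exact hc

def edgeMap (u w : E2) : E2 →ₗ[ℝ] E2 where
  toFun x := x 0 • u + x 1 • w
  map_add' x y := by
    have hx : ∀ i, (x + y) i = x i + y i := fun i => rfl
    simp only [hx, add_smul]; module
  map_smul' c x := by
    have hx : ∀ i, (c • x) i = c * x i := fun i => rfl
    simp only [hx, RingHom.id_apply, mul_smul]; module

lemma edgeMap_vals (u w : E2) : edgeMap u w 0 = 0 ∧ edgeMap u w e0 = u ∧ edgeMap u w e1 = w := by
  refine ⟨?_, ?_, ?_⟩ <;>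
    simp [edgeMap, e0_apply.1, e0_apply.2, e1_apply.1, e1_apply.2,
      show ((0:E2) 0 = 0) from rfl, show ((0:E2) 1 = 0) from rfl]

lemma triArea_eq (A B C : E2) :
    triArea A B C = |(B-A) 0 * (C-A) 1 - (B-A) 1 * (C-A) 0| / 2 := by
  set u := B - A with hu
  set w := C - A with hw
  set M := edgeMap u w with hM
  let aff : E2 →ᵃ[ℝ] E2 :=
    { toFun := fun x => A + M x
      linear := M
      map_vadd' := fun p v => by
        show A + M (v + p) = M v + (A + M p)
        rw [map_add]; abel }
  have haffc : ∀ x, aff x = A + M x := fun x => rfl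
  have h1 : convexHull ℝ ({A, B, C} : Set E2) = aff '' T1 := by
    rw [T1_hull, AffineMap.image_convexHull]
    congr 1
    rw [Set.image_insert_eq, Set.image_insert_eq, Set.image_singleton]
    obtain ⟨h0, he0, he1⟩ := edgeMap_vals u w
    rw [haffc, haffc, haffc, h0, he0, he1, add_zero, hu, hw,
      add_sub_cancel, add_sub_cancel]
  have h2 : aff '' T1 = A +ᵥ (M '' T1) := by
    ext y
    simp only [Set.mem_vadd_set, vadd_eq_add, Set.mem_image]
    constructor
    · rintro ⟨x, hx, rfl⟩; exact ⟨M x, ⟨x, hx, rfl⟩, rfl⟩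
    · rintro ⟨z, ⟨x, hx, rfl⟩, rfl⟩; exact ⟨x, hx, rfl⟩
  have hdet : LinearMap.det M = u 0 * w 1 - w 0 * u 1 := by
    obtain ⟨h0, he0, he1⟩ := edgeMap_vals u w
    rw [det_E2, he0, he1]
  have hvol : volume (convexHull ℝ ({A, B, C} : Set E2))
      = ENNReal.ofReal |u 0 * w 1 - w 0 * u 1| * ENNReal.ofReal (1/2) := by
    rw [h1, h2, measure_vadd, Measure.addHaar_image_linearMap, hdet, vol_T1]
  rw [triArea, hvol, ENNReal.toReal_mul, ENNReal.toReal_ofReal (abs_nonneg _),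
    ENNReal.toReal_ofReal (by norm_num)]
  have : u 0 * w 1 - w 0 * u 1 = u 0 * w 1 - u 1 * w 0 := by ring
  rw [this]
  ring

lemma innerc (x y : E2) : ⟪x, y⟫ = x 0 * y 0 + x 1 * y 1 := by
  simp [PiLp.inner_apply, RCLike.inner_apply, Fin.sum_univ_two, mul_comm]

lemma normsq (x : E2) : ‖x‖ ^ 2 = x 0 ^ 2 + x 1 ^ 2 := by
  rw [← real_inner_self_eq_norm_sq, innerc]; ring

lemma coordsub (a b : E2) (i : Fin 2) : (a - b) i = a i - b i := rfl

lemma sq_sum_ge (a b c : ℝ) (ha : 0 ≤ a) (hb : 0 ≤ b) (hc : 0 ≤ c) :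
    a ^ 2 + b ^ 2 + c ^ 2 ≤ (a + b + c) ^ 2 := by
  nlinarith [mul_nonneg ha hb, mul_nonneg ha hc, mul_nonneg hb hc]

end AuxStmt10

set_option maxHeartbeats 2000000 in
/-- gradient control by tangential edge derivatives:
for a nondegenerate triangle `ABC` with circumradius `R_T`, maximum angle `θM`,
diameter `h_T` (the longest edge), unit tangents `t_i` of the edges `e_i` opposite the
angles `θ_i`, and any affine `v` with gradient `g`, the cotangent formula
`‖∇v‖²_{L²(T)} = R_T Σᵢ cos θᵢ ‖∇v·tᵢ‖²_{L²(eᵢ)}` holds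
(with `‖∇v·tᵢ‖²_{L²(eᵢ)} = |eᵢ| (g·tᵢ)²` and `‖∇v‖²_{L²(T)} = |T| ‖g‖²`), and
consequently `‖∇v‖_{L²(T)} ≤ √h_T/√(2 sin θM) Σᵢ ‖∇v·tᵢ‖_{L²(eᵢ)}`. -/
theorem stmt10
    (A B C : EuclideanSpace ℝ (Fin 2))
    (hnd : AffineIndependent ℝ ![A, B, C])
    (RT : ℝ)
    (hcirc : ∃ O : EuclideanSpace ℝ (Fin 2), dist O A = RT ∧ dist O B = RT ∧ dist O C = RT)
    (g : EuclideanSpace ℝ (Fin 2)) (c : ℝ)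
    (v : EuclideanSpace ℝ (Fin 2) → ℝ)
    (hv : ∀ x, v x = ⟪g, x⟫ + c) :
    triArea A B C * ‖g‖ ^ 2
        = RT * (Real.cos (∠ B A C) * (dist B C * ⟪g, (‖C - B‖⁻¹ • (C - B) : EuclideanSpace ℝ (Fin 2))⟫ ^ 2)
            + Real.cos (∠ A B C) * (dist A C * ⟪g, (‖C - A‖⁻¹ • (C - A) : EuclideanSpace ℝ (Fin 2))⟫ ^ 2)
            + Real.cos (∠ A C B) * (dist A B * ⟪g, (‖B - A‖⁻¹ • (B - A) : EuclideanSpace ℝ (Fin 2))⟫ ^ 2)) ∧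
    Real.sqrt (triArea A B C) * ‖g‖
        ≤ Real.sqrt (max (dist B C) (max (dist A C) (dist A B))) /
            Real.sqrt (2 * Real.sin (max (∠ B A C) (max (∠ A B C) (∠ A C B)))) *
          (Real.sqrt (dist B C) * |⟪g, (‖C - B‖⁻¹ • (C - B) : EuclideanSpace ℝ (Fin 2))⟫|
            + Real.sqrt (dist A C) * |⟪g, (‖C - A‖⁻¹ • (C - A) : EuclideanSpace ℝ (Fin 2))⟫|
            + Real.sqrt (dist A B) * |⟪g, (‖B - A‖⁻¹ • (B - A) : EuclideanSpace ℝ (Fin 2))⟫|) := by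
  classical
  -- notation-free abbreviations via plain terms
  have coordsub : ∀ (a b : E2) (i : Fin 2), (a - b) i = a i - b i := fun _ _ _ => rfl
  -- not collinear
  have hnotcol : ¬Collinear ℝ ({A, B, C} : Set E2) := by
    have h := affineIndependent_iff_not_collinear.mp hnd
    have hr : Set.range ![A, B, C] = ({A, B, C} : Set E2) := by
      ext x
      constructor
      · rintro ⟨i, rfl⟩; fin_cases i <;> simp
      · rintro (rfl | rfl | rfl)
        exacts [⟨0, rfl⟩, ⟨1, rfl⟩, ⟨2, rfl⟩]
    rwa [hr] at h
  have hSne : (B 0 - A 0) * (C 1 - A 1) - (B 1 - A 1) * (C 0 - A 0) ≠ 0 := by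
    intro h0
    apply hnotcol
    refine (collinear_iff_of_mem (Set.mem_insert A {B, C})).mpr ?_
    by_cases hu : B - A = 0
    · refine ⟨C - A, ?_⟩
      intro p hp
      rcases hp with h | h | h
      · exact ⟨0, by rw [h]; simp⟩
      · refine ⟨0, ?_⟩
        have hBA : B = A := by rwa [sub_eq_zero] at hu
        rw [h, hBA]; simp
      · exact ⟨1, by rw [h]; simp⟩
    · have hcoord : B 0 - A 0 ≠ 0 ∨ B 1 - A 1 ≠ 0 := by
        by_contra hc
        push_neg at hc
        apply hu
        ext i
        fin_cases i <;>
          [skip; skip] <;>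
          · rw [show ((0:E2) _ = (0:ℝ)) from rfl] at *
            first
            | (show (B - A) 0 = 0; rw [coordsub]; linarith [hc.1])
            | (show (B - A) 1 = 0; rw [coordsub]; linarith [hc.2])
      refine ⟨B - A, ?_⟩
      intro p hp
      rcases hp with h | h | h
      · exact ⟨0, by rw [h]; simp⟩
      · refine ⟨1, ?_⟩
        rw [h]
        show B = (1:ℝ) • (B - A) + A
        rw [one_smul, sub_add_cancel]
      · rw [h]
        rcases hcoord with hx | hx
        · refine ⟨(C 0 - A 0) / (B 0 - A 0), ?_⟩
          show C = ((C 0 - A 0) / (B 0 - A 0)) • (B - A) + A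
          have hsm : ∀ (c : ℝ) (x : E2) (i : Fin 2), (c • x) i = c * x i := fun _ _ _ => rfl
          have hadd : ∀ (x y : E2) (i : Fin 2), (x + y) i = x i + y i := fun _ _ _ => rfl
          ext i
          fin_cases i
          · show C 0 = (((C 0 - A 0) / (B 0 - A 0)) • (B - A) + A) 0
            rw [hadd, hsm, coordsub]; field_simp; ring
          · show C 1 = (((C 0 - A 0) / (B 0 - A 0)) • (B - A) + A) 1
            rw [hadd, hsm, coordsub]; field_simp; linear_combination h0
        · refine ⟨(C 1 - A 1) / (B 1 - A 1), ?_⟩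
          show C = ((C 1 - A 1) / (B 1 - A 1)) • (B - A) + A
          have hsm : ∀ (c : ℝ) (x : E2) (i : Fin 2), (c • x) i = c * x i := fun _ _ _ => rfl
          have hadd : ∀ (x y : E2) (i : Fin 2), (x + y) i = x i + y i := fun _ _ _ => rfl
          ext i
          fin_cases i
          · show C 0 = (((C 1 - A 1) / (B 1 - A 1)) • (B - A) + A) 0
            rw [hadd, hsm, coordsub]; field_simp; linear_combination -h0
          · show C 1 = (((C 1 - A 1) / (B 1 - A 1)) • (B - A) + A) 1
            rw [hadd, hsm, coordsub]; field_simp; ring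
  have hspos : (0:ℝ) < |(B 0 - A 0) * (C 1 - A 1) - (B 1 - A 1) * (C 0 - A 0)| := abs_pos.mpr hSne
  -- positivity of edge lengths
  have hnu : (0:ℝ) < ‖B - A‖ := by
    rw [norm_pos_iff]
    intro h
    apply hSne
    have h0 : B 0 - A 0 = 0 := by rw [← coordsub]; rw [h]; rfl
    have h1 : B 1 - A 1 = 0 := by rw [← coordsub]; rw [h]; rfl
    rw [h0, h1]; ring
  have hnw : (0:ℝ) < ‖C - A‖ := by
    rw [norm_pos_iff]
    intro h
    apply hSne
    have h0 : C 0 - A 0 = 0 := by rw [← coordsub]; rw [h]; rfl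
    have h1 : C 1 - A 1 = 0 := by rw [← coordsub]; rw [h]; rfl
    rw [h0, h1]; ring
  have hna : (0:ℝ) < ‖C - B‖ := by
    rw [norm_pos_iff]
    intro h
    apply hSne
    have h0 : C 0 - B 0 = 0 := by rw [← coordsub]; rw [h]; rfl
    have h1 : C 1 - B 1 = 0 := by rw [← coordsub]; rw [h]; rfl
    linear_combination (B 0 - A 0) * h1 - (B 1 - A 1) * h0
  -- circumradius formula
  obtain ⟨O, hOA, hOB, hOC⟩ := hcirc
  have hOA' : ‖O - A‖ = RT := by rw [← dist_eq_norm]; exact hOA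
  have hRTnn : (0:ℝ) ≤ RT := by rw [← hOA]; exact dist_nonneg
  have hRTsq : RT ^ 2 = (O 0 - A 0) ^ 2 + (O 1 - A 1) ^ 2 := by
    rw [← hOA', normsq, coordsub, coordsub]
  have hp1 : 2 * ((O 0 - A 0) * (B 0 - A 0) + (O 1 - A 1) * (B 1 - A 1))
      = (B 0 - A 0) ^ 2 + (B 1 - A 1) ^ 2 := by
    have h : ‖O - A‖ ^ 2 = ‖O - B‖ ^ 2 := by
      rw [← dist_eq_norm, ← dist_eq_norm, hOA, hOB]
    rw [normsq, normsq, coordsub, coordsub, coordsub, coordsub] at h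
    linear_combination h
  have hp2 : 2 * ((O 0 - A 0) * (C 0 - A 0) + (O 1 - A 1) * (C 1 - A 1))
      = (C 0 - A 0) ^ 2 + (C 1 - A 1) ^ 2 := by
    have h : ‖O - A‖ ^ 2 = ‖O - C‖ ^ 2 := by
      rw [← dist_eq_norm, ← dist_eq_norm, hOA, hOC]
    rw [normsq, normsq, coordsub, coordsub, coordsub, coordsub] at h
    linear_combination h
  have hnu2 : ‖B - A‖ ^ 2 = (B 0 - A 0) ^ 2 + (B 1 - A 1) ^ 2 := by
    rw [normsq, coordsub, coordsub]
  have hnw2 : ‖C - A‖ ^ 2 = (C 0 - A 0) ^ 2 + (C 1 - A 1) ^ 2 := by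
    rw [normsq, coordsub, coordsub]
  have hna2 : ‖C - B‖ ^ 2 = (C 0 - B 0) ^ 2 + (C 1 - B 1) ^ 2 := by
    rw [normsq, coordsub, coordsub]
  have hkey : (2 * ((B 0 - A 0) * (C 1 - A 1) - (B 1 - A 1) * (C 0 - A 0)) * RT) ^ 2
      = (‖B - A‖ * ‖C - A‖ * ‖C - B‖) ^ 2 := by
    have hq0 : 2 * ((B 0 - A 0) * (C 1 - A 1) - (B 1 - A 1) * (C 0 - A 0)) * (O 0 - A 0)
        = ((B 0 - A 0) ^ 2 + (B 1 - A 1) ^ 2) * (C 1 - A 1)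
          - ((C 0 - A 0) ^ 2 + (C 1 - A 1) ^ 2) * (B 1 - A 1) := by
      linear_combination (C 1 - A 1) * hp1 - (B 1 - A 1) * hp2
    have hq1 : 2 * ((B 0 - A 0) * (C 1 - A 1) - (B 1 - A 1) * (C 0 - A 0)) * (O 1 - A 1)
        = ((C 0 - A 0) ^ 2 + (C 1 - A 1) ^ 2) * (B 0 - A 0)
          - ((B 0 - A 0) ^ 2 + (B 1 - A 1) ^ 2) * (C 0 - A 0) := by
      linear_combination (B 0 - A 0) * hp2 - (C 0 - A 0) * hp1
    rw [show (‖B - A‖ * ‖C - A‖ * ‖C - B‖) ^ 2 = ‖B - A‖ ^ 2 * ‖C - A‖ ^ 2 * ‖C - B‖ ^ 2 from by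
      ring, hnu2, hnw2, hna2]
    linear_combination
      (2 * ((B 0 - A 0) * (C 1 - A 1) - (B 1 - A 1) * (C 0 - A 0)) * (O 0 - A 0)
        + (((B 0 - A 0) ^ 2 + (B 1 - A 1) ^ 2) * (C 1 - A 1)
          - ((C 0 - A 0) ^ 2 + (C 1 - A 1) ^ 2) * (B 1 - A 1))) * hq0
      + (2 * ((B 0 - A 0) * (C 1 - A 1) - (B 1 - A 1) * (C 0 - A 0)) * (O 1 - A 1)
        + (((C 0 - A 0) ^ 2 + (C 1 - A 1) ^ 2) * (B 0 - A 0)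
          - ((B 0 - A 0) ^ 2 + (B 1 - A 1) ^ 2) * (C 0 - A 0))) * hq1
      + (4 * ((B 0 - A 0) * (C 1 - A 1) - (B 1 - A 1) * (C 0 - A 0)) ^ 2) * hRTsq
  have hss : |(B 0 - A 0) * (C 1 - A 1) - (B 1 - A 1) * (C 0 - A 0)| ^ 2
      = ((B 0 - A 0) * (C 1 - A 1) - (B 1 - A 1) * (C 0 - A 0)) ^ 2 := sq_abs _
  have h2sRT : 2 * |(B 0 - A 0) * (C 1 - A 1) - (B 1 - A 1) * (C 0 - A 0)| * RT
      = ‖B - A‖ * ‖C - A‖ * ‖C - B‖ := by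
    have h1 : (0:ℝ) ≤ 2 * |(B 0 - A 0) * (C 1 - A 1) - (B 1 - A 1) * (C 0 - A 0)| * RT :=
      mul_nonneg (mul_nonneg (by norm_num) (abs_nonneg _)) hRTnn
    have h2 : (0:ℝ) ≤ ‖B - A‖ * ‖C - A‖ * ‖C - B‖ := by positivity
    have habs : (2 * |(B 0 - A 0) * (C 1 - A 1) - (B 1 - A 1) * (C 0 - A 0)| * RT) ^ 2
        = (‖B - A‖ * ‖C - A‖ * ‖C - B‖) ^ 2 := by
      linear_combination (4 * RT ^ 2) * hss + hkey
    calc 2 * |(B 0 - A 0) * (C 1 - A 1) - (B 1 - A 1) * (C 0 - A 0)| * RT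
        = Real.sqrt ((2 * |(B 0 - A 0) * (C 1 - A 1) - (B 1 - A 1) * (C 0 - A 0)| * RT) ^ 2) :=
          (Real.sqrt_sq h1).symm
      _ = Real.sqrt ((‖B - A‖ * ‖C - A‖ * ‖C - B‖) ^ 2) := by rw [habs]
      _ = ‖B - A‖ * ‖C - A‖ * ‖C - B‖ := Real.sqrt_sq h2
  have hRT : RT = ‖B - A‖ * ‖C - A‖ * ‖C - B‖
      / (2 * |(B 0 - A 0) * (C 1 - A 1) - (B 1 - A 1) * (C 0 - A 0)|) := by
    field_simp
    linear_combination h2sRT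
  -- cosines and inner products
  have hGa : ⟪g, (‖C - B‖⁻¹ • (C - B) : E2)⟫ = ‖C - B‖⁻¹ * ⟪g, C - B⟫ :=
    real_inner_smul_right _ _ _
  have hGb : ⟪g, (‖C - A‖⁻¹ • (C - A) : E2)⟫ = ‖C - A‖⁻¹ * ⟪g, C - A⟫ :=
    real_inner_smul_right _ _ _
  have hGc : ⟪g, (‖B - A‖⁻¹ • (B - A) : E2)⟫ = ‖B - A‖⁻¹ * ⟪g, B - A⟫ :=
    real_inner_smul_right _ _ _
  have hcosA : Real.cos (∠ B A C) = ⟪B - A, C - A⟫ / (‖B - A‖ * ‖C - A‖) :=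
    InnerProductGeometry.cos_angle _ _
  have hcosB : Real.cos (∠ A B C) = ⟪A - B, C - B⟫ / (‖B - A‖ * ‖C - B‖) := by
    have h := InnerProductGeometry.cos_angle (A - B) (C - B)
    rwa [norm_sub_rev A B] at h
  have hcosC : Real.cos (∠ A C B) = ⟪A - C, B - C⟫ / (‖C - A‖ * ‖C - B‖) := by
    have h := InnerProductGeometry.cos_angle (A - C) (B - C)
    rwa [norm_sub_rev A C, norm_sub_rev B C] at h
  have hdBC : dist B C = ‖C - B‖ := by rw [dist_comm, dist_eq_norm]
  have hdAC : dist A C = ‖C - A‖ := by rw [dist_comm, dist_eq_norm]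
  have hdAB : dist A B = ‖B - A‖ := by rw [dist_comm, dist_eq_norm]
  have htri : triArea A B C
      = |(B 0 - A 0) * (C 1 - A 1) - (B 1 - A 1) * (C 0 - A 0)| / 2 := by
    rw [triArea_eq, coordsub, coordsub, coordsub, coordsub]
  -- the main equality
  have h1 : triArea A B C * ‖g‖ ^ 2
      = RT * (Real.cos (∠ B A C) * (dist B C * ⟪g, (‖C - B‖⁻¹ • (C - B) : E2)⟫ ^ 2)
          + Real.cos (∠ A B C) * (dist A C * ⟪g, (‖C - A‖⁻¹ • (C - A) : E2)⟫ ^ 2)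
          + Real.cos (∠ A C B) * (dist A B * ⟪g, (‖B - A‖⁻¹ • (B - A) : E2)⟫ ^ 2)) := by
    rw [hGa, hGb, hGc, hdBC, hdAC, hdAB, hcosA, hcosB, hcosC, htri, hRT]
    have t1 : ⟪B - A, C - A⟫ / (‖B - A‖ * ‖C - A‖) * (‖C - B‖ * (‖C - B‖⁻¹ * ⟪g, C - B⟫) ^ 2)
        = ⟪B - A, C - A⟫ * ⟪g, C - B⟫ ^ 2 / (‖B - A‖ * ‖C - A‖ * ‖C - B‖) := by
      field_simp [hnu.ne', hnw.ne', hna.ne']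
    have t2 : ⟪A - B, C - B⟫ / (‖B - A‖ * ‖C - B‖) * (‖C - A‖ * (‖C - A‖⁻¹ * ⟪g, C - A⟫) ^ 2)
        = ⟪A - B, C - B⟫ * ⟪g, C - A⟫ ^ 2 / (‖B - A‖ * ‖C - A‖ * ‖C - B‖) := by
      field_simp [hnu.ne', hnw.ne', hna.ne']
    have t3 : ⟪A - C, B - C⟫ / (‖C - A‖ * ‖C - B‖) * (‖B - A‖ * (‖B - A‖⁻¹ * ⟪g, B - A⟫) ^ 2)
        = ⟪A - C, B - C⟫ * ⟪g, B - A⟫ ^ 2 / (‖B - A‖ * ‖C - A‖ * ‖C - B‖) := by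
      field_simp [hnu.ne', hnw.ne', hna.ne']
    rw [t1, t2, t3, ← add_div, ← add_div]
    have hnum : ⟪B - A, C - A⟫ * ⟪g, C - B⟫ ^ 2 + ⟪A - B, C - B⟫ * ⟪g, C - A⟫ ^ 2
        + ⟪A - C, B - C⟫ * ⟪g, B - A⟫ ^ 2
        = ((B 0 - A 0) * (C 1 - A 1) - (B 1 - A 1) * (C 0 - A 0)) ^ 2 * ‖g‖ ^ 2 := by
      rw [innerc (B - A) (C - A), innerc (A - B) (C - B), innerc (A - C) (B - C),
        innerc g (C - B), innerc g (C - A), innerc g (B - A), normsq g]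
      simp only [coordsub]
      ring
    rw [hnum, ← hss]
    field_simp [hnu.ne', hnw.ne', hna.ne', hspos.ne']
  refine ⟨h1, ?_⟩
  -- sines
  have hsinA : Real.sin (∠ B A C) * (‖B - A‖ * ‖C - A‖)
      = |(B 0 - A 0) * (C 1 - A 1) - (B 1 - A 1) * (C 0 - A 0)| := by
    have h := InnerProductGeometry.sin_angle_mul_norm_mul_norm (B - A) (C - A)
    rw [innerc (B - A) (B - A), innerc (C - A) (C - A), innerc (B - A) (C - A)] at h
    simp only [coordsub] at h
    have harg : ((B 0 - A 0) * (B 0 - A 0) + (B 1 - A 1) * (B 1 - A 1))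
          * ((C 0 - A 0) * (C 0 - A 0) + (C 1 - A 1) * (C 1 - A 1))
          - ((B 0 - A 0) * (C 0 - A 0) + (B 1 - A 1) * (C 1 - A 1))
          * ((B 0 - A 0) * (C 0 - A 0) + (B 1 - A 1) * (C 1 - A 1))
        = ((B 0 - A 0) * (C 1 - A 1) - (B 1 - A 1) * (C 0 - A 0)) ^ 2 := by ring
    rw [harg, Real.sqrt_sq_eq_abs] at h
    exact h
  have hsinB : Real.sin (∠ A B C) * (‖B - A‖ * ‖C - B‖)
      = |(B 0 - A 0) * (C 1 - A 1) - (B 1 - A 1) * (C 0 - A 0)| := by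
    have h := InnerProductGeometry.sin_angle_mul_norm_mul_norm (A - B) (C - B)
    rw [norm_sub_rev A B, innerc (A - B) (A - B), innerc (C - B) (C - B),
      innerc (A - B) (C - B)] at h
    simp only [coordsub] at h
    have harg : ((A 0 - B 0) * (A 0 - B 0) + (A 1 - B 1) * (A 1 - B 1))
          * ((C 0 - B 0) * (C 0 - B 0) + (C 1 - B 1) * (C 1 - B 1))
          - ((A 0 - B 0) * (C 0 - B 0) + (A 1 - B 1) * (C 1 - B 1))
          * ((A 0 - B 0) * (C 0 - B 0) + (A 1 - B 1) * (C 1 - B 1))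
        = ((B 0 - A 0) * (C 1 - A 1) - (B 1 - A 1) * (C 0 - A 0)) ^ 2 := by ring
    rw [harg, Real.sqrt_sq_eq_abs] at h
    exact h
  have hsinC : Real.sin (∠ A C B) * (‖C - A‖ * ‖C - B‖)
      = |(B 0 - A 0) * (C 1 - A 1) - (B 1 - A 1) * (C 0 - A 0)| := by
    have h := InnerProductGeometry.sin_angle_mul_norm_mul_norm (A - C) (B - C)
    rw [norm_sub_rev A C, norm_sub_rev B C, innerc (A - C) (A - C), innerc (B - C) (B - C),
      innerc (A - C) (B - C)] at h
    simp only [coordsub] at h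
    have harg : ((A 0 - C 0) * (A 0 - C 0) + (A 1 - C 1) * (A 1 - C 1))
          * ((B 0 - C 0) * (B 0 - C 0) + (B 1 - C 1) * (B 1 - C 1))
          - ((A 0 - C 0) * (B 0 - C 0) + (A 1 - C 1) * (B 1 - C 1))
          * ((A 0 - C 0) * (B 0 - C 0) + (A 1 - C 1) * (B 1 - C 1))
        = ((B 0 - A 0) * (C 1 - A 1) - (B 1 - A 1) * (C 0 - A 0)) ^ 2 := by ring
    rw [harg, Real.sqrt_sq_eq_abs] at h
    exact h
  -- law of sines
  have hlawA : 2 * RT * Real.sin (∠ B A C) = ‖C - B‖ := by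
    rw [hRT]
    field_simp [hspos.ne']
    linear_combination hsinA
  have hlawB : 2 * RT * Real.sin (∠ A B C) = ‖C - A‖ := by
    rw [hRT]
    field_simp [hspos.ne']
    linear_combination hsinB
  have hlawC : 2 * RT * Real.sin (∠ A C B) = ‖B - A‖ := by
    rw [hRT]
    field_simp [hspos.ne']
    linear_combination hsinC
  -- permuted collinearity
  have hcolB : ¬Collinear ℝ ({B, A, C} : Set E2) := by
    rw [Set.insert_comm]; exact hnotcol
  have hcolC : ¬Collinear ℝ ({A, C, B} : Set E2) := by
    rw [Set.pair_comm C B]; exact hnotcol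
  have hsinM : 0 < Real.sin (max (∠ B A C) (max (∠ A B C) (∠ A C B))) := by
    apply Real.sin_pos_of_pos_of_lt_pi
    · exact lt_max_of_lt_left (EuclideanGeometry.angle_pos_of_not_collinear hcolB)
    · exact max_lt (EuclideanGeometry.angle_lt_pi_of_not_collinear hcolB)
        (max_lt (EuclideanGeometry.angle_lt_pi_of_not_collinear hnotcol)
          (EuclideanGeometry.angle_lt_pi_of_not_collinear hcolC))
  have hT0 : (0:ℝ) ≤ max (dist B C) (max (dist A C) (dist A B)) :=
    le_trans dist_nonneg (le_max_left _ _)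
  have hlawM : 2 * RT * Real.sin (max (∠ B A C) (max (∠ A B C) (∠ A C B)))
      ≤ max (dist B C) (max (dist A C) (dist A B)) := by
    rcases max_choice (∠ B A C) (max (∠ A B C) (∠ A C B)) with hM | hM
    · rw [hM, hlawA, ← hdBC]
      exact le_max_left _ _
    · rw [hM]
      rcases max_choice (∠ A B C) (∠ A C B) with hM2 | hM2
      · rw [hM2, hlawB, ← hdAC]
        exact le_max_of_le_right (le_max_left _ _)
      · rw [hM2, hlawC, ← hdAB]
        exact le_max_of_le_right (le_max_right _ _)
  have h2sin : (0:ℝ) < 2 * Real.sin (max (∠ B A C) (max (∠ A B C) (∠ A C B))) := by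
    linarith [hsinM]
  have hRTle : RT ≤ max (dist B C) (max (dist A C) (dist A B))
      / (2 * Real.sin (max (∠ B A C) (max (∠ A B C) (∠ A C B)))) := by
    rw [le_div_iff₀ h2sin]
    calc RT * (2 * Real.sin (max (∠ B A C) (max (∠ A B C) (∠ A C B))))
        = 2 * RT * Real.sin (max (∠ B A C) (max (∠ A B C) (∠ A C B))) := by ring
      _ ≤ _ := hlawM
  have hDdiv : (0:ℝ) ≤ max (dist B C) (max (dist A C) (dist A B))
      / (2 * Real.sin (max (∠ B A C) (max (∠ A B C) (∠ A C B)))) :=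
    div_nonneg hT0 (le_of_lt h2sin)
  -- bound the cosine sum
  have hterm1 : Real.cos (∠ B A C) * (dist B C * ⟪g, (‖C - B‖⁻¹ • (C - B) : E2)⟫ ^ 2)
      ≤ dist B C * ⟪g, (‖C - B‖⁻¹ • (C - B) : E2)⟫ ^ 2 :=
    mul_le_of_le_one_left (by positivity) (Real.cos_le_one _)
  have hterm2 : Real.cos (∠ A B C) * (dist A C * ⟪g, (‖C - A‖⁻¹ • (C - A) : E2)⟫ ^ 2)
      ≤ dist A C * ⟪g, (‖C - A‖⁻¹ • (C - A) : E2)⟫ ^ 2 :=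
    mul_le_of_le_one_left (by positivity) (Real.cos_le_one _)
  have hterm3 : Real.cos (∠ A C B) * (dist A B * ⟪g, (‖B - A‖⁻¹ • (B - A) : E2)⟫ ^ 2)
      ≤ dist A B * ⟪g, (‖B - A‖⁻¹ • (B - A) : E2)⟫ ^ 2 :=
    mul_le_of_le_one_left (by positivity) (Real.cos_le_one _)
  have hYnn : (0:ℝ) ≤ dist B C * ⟪g, (‖C - B‖⁻¹ • (C - B) : E2)⟫ ^ 2
      + dist A C * ⟪g, (‖C - A‖⁻¹ • (C - A) : E2)⟫ ^ 2
      + dist A B * ⟪g, (‖B - A‖⁻¹ • (B - A) : E2)⟫ ^ 2 := by positivity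
  have hstep : triArea A B C * ‖g‖ ^ 2
      ≤ (max (dist B C) (max (dist A C) (dist A B))
          / (2 * Real.sin (max (∠ B A C) (max (∠ A B C) (∠ A C B)))))
        * (dist B C * ⟪g, (‖C - B‖⁻¹ • (C - B) : E2)⟫ ^ 2
          + dist A C * ⟪g, (‖C - A‖⁻¹ • (C - A) : E2)⟫ ^ 2
          + dist A B * ⟪g, (‖B - A‖⁻¹ • (B - A) : E2)⟫ ^ 2) := by
    rw [h1]
    calc RT * (Real.cos (∠ B A C) * (dist B C * ⟪g, (‖C - B‖⁻¹ • (C - B) : E2)⟫ ^ 2)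
          + Real.cos (∠ A B C) * (dist A C * ⟪g, (‖C - A‖⁻¹ • (C - A) : E2)⟫ ^ 2)
          + Real.cos (∠ A C B) * (dist A B * ⟪g, (‖B - A‖⁻¹ • (B - A) : E2)⟫ ^ 2))
        ≤ RT * (dist B C * ⟪g, (‖C - B‖⁻¹ • (C - B) : E2)⟫ ^ 2
          + dist A C * ⟪g, (‖C - A‖⁻¹ • (C - A) : E2)⟫ ^ 2
          + dist A B * ⟪g, (‖B - A‖⁻¹ • (B - A) : E2)⟫ ^ 2) :=
          mul_le_mul_of_nonneg_left (add_le_add (add_le_add hterm1 hterm2) hterm3) hRTnn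
      _ ≤ _ := mul_le_mul_of_nonneg_right hRTle hYnn
  have e1 : dist B C * ⟪g, (‖C - B‖⁻¹ • (C - B) : E2)⟫ ^ 2
      = (Real.sqrt (dist B C) * |⟪g, (‖C - B‖⁻¹ • (C - B) : E2)⟫|) ^ 2 := by
    rw [mul_pow, Real.sq_sqrt dist_nonneg, sq_abs]
  have e2 : dist A C * ⟪g, (‖C - A‖⁻¹ • (C - A) : E2)⟫ ^ 2
      = (Real.sqrt (dist A C) * |⟪g, (‖C - A‖⁻¹ • (C - A) : E2)⟫|) ^ 2 := by
    rw [mul_pow, Real.sq_sqrt dist_nonneg, sq_abs]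
  have e3 : dist A B * ⟪g, (‖B - A‖⁻¹ • (B - A) : E2)⟫ ^ 2
      = (Real.sqrt (dist A B) * |⟪g, (‖B - A‖⁻¹ • (B - A) : E2)⟫|) ^ 2 := by
    rw [mul_pow, Real.sq_sqrt dist_nonneg, sq_abs]
  have hquad : dist B C * ⟪g, (‖C - B‖⁻¹ • (C - B) : E2)⟫ ^ 2
      + dist A C * ⟪g, (‖C - A‖⁻¹ • (C - A) : E2)⟫ ^ 2
      + dist A B * ⟪g, (‖B - A‖⁻¹ • (B - A) : E2)⟫ ^ 2
      ≤ (Real.sqrt (dist B C) * |⟪g, (‖C - B‖⁻¹ • (C - B) : E2)⟫|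
        + Real.sqrt (dist A C) * |⟪g, (‖C - A‖⁻¹ • (C - A) : E2)⟫|
        + Real.sqrt (dist A B) * |⟪g, (‖B - A‖⁻¹ • (B - A) : E2)⟫|) ^ 2 := by
    rw [e1, e2, e3]
    exact sq_sum_ge _ _ _ (by positivity) (by positivity) (by positivity)
  have hfin : triArea A B C * ‖g‖ ^ 2
      ≤ (max (dist B C) (max (dist A C) (dist A B))
          / (2 * Real.sin (max (∠ B A C) (max (∠ A B C) (∠ A C B)))))
        * (Real.sqrt (dist B C) * |⟪g, (‖C - B‖⁻¹ • (C - B) : E2)⟫|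
          + Real.sqrt (dist A C) * |⟪g, (‖C - A‖⁻¹ • (C - A) : E2)⟫|
          + Real.sqrt (dist A B) * |⟪g, (‖B - A‖⁻¹ • (B - A) : E2)⟫|) ^ 2 :=
    le_trans hstep (mul_le_mul_of_nonneg_left hquad hDdiv)
  have hPnn : (0:ℝ) ≤ Real.sqrt (dist B C) * |⟪g, (‖C - B‖⁻¹ • (C - B) : E2)⟫|
      + Real.sqrt (dist A C) * |⟪g, (‖C - A‖⁻¹ • (C - A) : E2)⟫|
      + Real.sqrt (dist A B) * |⟪g, (‖B - A‖⁻¹ • (B - A) : E2)⟫| := by positivity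
  have htri0 : (0:ℝ) ≤ triArea A B C := by rw [htri]; positivity
  calc Real.sqrt (triArea A B C) * ‖g‖
      = Real.sqrt (triArea A B C * ‖g‖ ^ 2) := by
        rw [Real.sqrt_mul htri0, Real.sqrt_sq (norm_nonneg g)]
    _ ≤ Real.sqrt ((max (dist B C) (max (dist A C) (dist A B))
          / (2 * Real.sin (max (∠ B A C) (max (∠ A B C) (∠ A C B)))))
        * (Real.sqrt (dist B C) * |⟪g, (‖C - B‖⁻¹ • (C - B) : E2)⟫|
          + Real.sqrt (dist A C) * |⟪g, (‖C - A‖⁻¹ • (C - A) : E2)⟫|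
          + Real.sqrt (dist A B) * |⟪g, (‖B - A‖⁻¹ • (B - A) : E2)⟫|) ^ 2) :=
        Real.sqrt_le_sqrt hfin
    _ = Real.sqrt (max (dist B C) (max (dist A C) (dist A B))
          / (2 * Real.sin (max (∠ B A C) (max (∠ A B C) (∠ A C B)))))
        * (Real.sqrt (dist B C) * |⟪g, (‖C - B‖⁻¹ • (C - B) : E2)⟫|
          + Real.sqrt (dist A C) * |⟪g, (‖C - A‖⁻¹ • (C - A) : E2)⟫|
          + Real.sqrt (dist A B) * |⟪g, (‖B - A‖⁻¹ • (B - A) : E2)⟫|) := by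
        rw [Real.sqrt_mul hDdiv, Real.sqrt_sq hPnn]
    _ = _ := by rw [Real.sqrt_div hT0]
end

section
/- (Control of directional components along a segment by the two long edges) Let T be a triangle with maximum angle θ_M attained at a vertex, and let e₁, e₂ be the two edges adjacent to the maximum angle, with unit tangents t₁, t₂ and angle θ between directions used in the affine map. For a right triangle (θ_M = π/2 with e₁ on the x₁-axis), for every constant vector v ∈ ℝ² and every segment e ⊆ T with unit tangent t_e, ‖v·t_e‖_{L²(e)} ≤ ‖v·t₁‖_{L²(e₁)} + ‖v·t₂‖_{L²(e₂)}; in general ‖v·t_e‖_{L²(e)} ≲ (sin θ_M)^{-1/2}(‖v·t₁‖_{L²(e₁)} + ‖v·t₂‖_{L²(e₂)}). -/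
open EuclideanGeometry Real MeasureTheory
open scoped RealInnerProductSpace


section aux
variable {E : Type*} [NormedAddCommGroup E] [InnerProductSpace ℝ E]

lemma gram_identity (u w : E) (a b : ℝ) :
    ⟪a • u + b • w, a • u + b • w⟫ * ⟪w, w⟫ - ⟪a • u + b • w, w⟫ ^ 2
      = a ^ 2 * (⟪u, u⟫ * ⟪w, w⟫ - ⟪u, w⟫ ^ 2) := by
  simp only [inner_add_left, inner_add_right, real_inner_smul_left, real_inner_smul_right,
    real_inner_comm u w]
  ring

lemma lower_bound (u w : E) (a b : ℝ) :
    |a| * (Real.sin (InnerProductGeometry.angle u w) * ‖u‖) * ‖w‖ ≤ ‖a • u + b • w‖ * ‖w‖ := by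
  have hCS : ⟪u, w⟫ * ⟪u, w⟫ ≤ ⟪u, u⟫ * ⟪w, w⟫ := real_inner_mul_inner_self_le u w
  have h1 : Real.sin (InnerProductGeometry.angle u w) * (‖u‖ * ‖w‖)
      = Real.sqrt (⟪u, u⟫ * ⟪w, w⟫ - ⟪u, w⟫ * ⟪u, w⟫) :=
    InnerProductGeometry.sin_angle_mul_norm_mul_norm u w
  have h2 : (Real.sin (InnerProductGeometry.angle u w) * (‖u‖ * ‖w‖)) ^ 2
      = ⟪u, u⟫ * ⟪w, w⟫ - ⟪u, w⟫ ^ 2 := by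
    rw [h1, sq, Real.mul_self_sqrt (by nlinarith)]
    ring
  set r : E := a • u + b • w with hr
  have h3 : ⟪r, r⟫ * ⟪w, w⟫ - ⟪r, w⟫ ^ 2 = a ^ 2 * (⟪u, u⟫ * ⟪w, w⟫ - ⟪u, w⟫ ^ 2) :=
    gram_identity u w a b
  have h4 : (|a| * (Real.sin (InnerProductGeometry.angle u w) * ‖u‖) * ‖w‖) ^ 2
      ≤ (‖r‖ * ‖w‖) ^ 2 := by
    have hrr : ⟪r, r⟫ = ‖r‖ ^ 2 := real_inner_self_eq_norm_sq r
    have hww : ⟪w, w⟫ = ‖w‖ ^ 2 := real_inner_self_eq_norm_sq w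
    have hsq : (⟪r, w⟫ : ℝ) ^ 2 ≥ 0 := sq_nonneg _
    have habs : |a| ^ 2 = a ^ 2 := sq_abs a
    nlinarith [h2, h3]
  exact (abs_le_of_sq_le_sq' h4 (by positivity)).2

lemma hull_coeff (A B C' p : E) (hp : p ∈ convexHull ℝ ({A, B, C'} : Set E)) :
    ∃ s₁ s₂ : ℝ, 0 ≤ s₁ ∧ 0 ≤ s₂ ∧ s₁ + s₂ ≤ 1 ∧
      p - A = s₁ • (B - A) + s₂ • (C' - A) := by
  rw [show ({A, B, C'} : Set E) = insert A {B, C'} from rfl,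
    convexHull_insert ⟨B, by simp⟩, convexHull_pair] at hp
  rw [mem_convexJoin] at hp
  obtain ⟨x, hx, y, hy, hseg⟩ := hp
  rw [Set.mem_singleton_iff] at hx
  subst hx
  obtain ⟨c, d, hc, hd, hcd, hy⟩ := hy
  obtain ⟨e, f, he, hf, hef, hseg⟩ := hseg
  refine ⟨f * c, f * d, by positivity, by positivity, by nlinarith, ?_⟩
  have hd' : d = 1 - c := by linarith
  have he' : e = 1 - f := by linarith
  subst hd' he'
  rw [← hseg, ← hy]
  module

lemma scalar_est (SL Su Sw Ss X₁ X₂ a b Y : ℝ) (hSL : 0 < SL) (hSu : 0 < Su)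
    (hSw : 0 < Sw) (hSs : 0 < Ss) (hX₁ : 0 ≤ X₁) (hX₂ : 0 ≤ X₂)
    (ha : |a| * Ss * Su ≤ SL) (hb : |b| * Ss * Sw ≤ SL)
    (hY : Y ≤ |a| * X₁ + |b| * X₂) :
    SL⁻¹ * Y ≤ Ss⁻¹ * (Su⁻¹ * X₁ + Sw⁻¹ * X₂) := by
  have h1 : |a| / SL ≤ 1 / (Ss * Su) := by
    rw [div_le_div_iff₀ hSL (by positivity)]
    nlinarith
  have h2 : |b| / SL ≤ 1 / (Ss * Sw) := by
    rw [div_le_div_iff₀ hSL (by positivity)]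
    nlinarith
  calc SL⁻¹ * Y ≤ SL⁻¹ * (|a| * X₁ + |b| * X₂) := by
        apply mul_le_mul_of_nonneg_left hY (by positivity)
    _ = (|a| / SL) * X₁ + (|b| / SL) * X₂ := by ring
    _ ≤ (1 / (Ss * Su)) * X₁ + (1 / (Ss * Sw)) * X₂ := by
        exact add_le_add (mul_le_mul_of_nonneg_right h1 hX₁)
          (mul_le_mul_of_nonneg_right h2 hX₂)
    _ = Ss⁻¹ * (Su⁻¹ * X₁ + Sw⁻¹ * X₂) := by
        field_simp

set_option maxHeartbeats 1000000 in
lemma main_est (A B C' : E) (hBA : B ≠ A) (hCA : C' ≠ A)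
    (hs : 0 < Real.sin (∠ B A C'))
    (p q : E)
    (hp : p ∈ convexHull ℝ ({A, B, C'} : Set E))
    (hq : q ∈ convexHull ℝ ({A, B, C'} : Set E)) (hpq : p ≠ q)
    (v : E) :
    Real.sqrt (dist p q) * |⟪v, (‖q - p‖⁻¹ • (q - p) : E)⟫|
      ≤ (Real.sqrt (Real.sin (∠ B A C')))⁻¹ *
        (Real.sqrt (dist A B) * |⟪v, (‖B - A‖⁻¹ • (B - A) : E)⟫|
          + Real.sqrt (dist A C') * |⟪v, (‖C' - A‖⁻¹ • (C' - A) : E)⟫|) := by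
  set u : E := B - A with hu
  set w : E := C' - A with hw
  have hu0 : 0 < ‖u‖ := norm_pos_iff.mpr (sub_ne_zero.mpr hBA)
  have hw0 : 0 < ‖w‖ := norm_pos_iff.mpr (sub_ne_zero.mpr hCA)
  have hθ : ∠ B A C' = InnerProductGeometry.angle u w := rfl
  set σ := Real.sin (∠ B A C') with hσ
  obtain ⟨s₁, s₂, hs₁, hs₂, hs₁₂, hpA⟩ := hull_coeff A B C' p hp
  obtain ⟨t₁, t₂, ht₁, ht₂, ht₁₂, hqA⟩ := hull_coeff A B C' q hq
  set a := t₁ - s₁ with hA2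
  set b := t₂ - s₂ with hB2
  have hab : q - p = a • u + b • w := by
    have : q - p = (q - A) - (p - A) := by abel
    rw [this, hpA, hqA, hA2, hB2]
    module
  have ha1 : |a| ≤ 1 := abs_le.mpr ⟨by linarith, by linarith⟩
  have hb1 : |b| ≤ 1 := abs_le.mpr ⟨by linarith, by linarith⟩
  have hL0 : 0 < ‖q - p‖ := norm_pos_iff.mpr (sub_ne_zero.mpr hpq.symm)
  -- key lower bounds
  have key1 : |a| * σ * ‖u‖ ≤ ‖q - p‖ := by
    have h := lower_bound u w a b
    rw [← hθ, ← hσ, ← hab] at h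
    have := le_of_mul_le_mul_right h hw0
    nlinarith
  have key2 : |b| * σ * ‖w‖ ≤ ‖q - p‖ := by
    have h := lower_bound w u b a
    rw [InnerProductGeometry.angle_comm, ← hθ, ← hσ, add_comm] at h
    rw [← hab] at h
    have := le_of_mul_le_mul_right h hu0
    nlinarith
  -- rewrite distances
  have hdpq : dist p q = ‖q - p‖ := by rw [dist_eq_norm, norm_sub_rev]
  have hdAB : dist A B = ‖u‖ := by rw [dist_eq_norm, norm_sub_rev, hu]
  have hdAC : dist A C' = ‖w‖ := by rw [dist_eq_norm, norm_sub_rev, hw]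
  rw [hdpq, hdAB, hdAC]
  -- rewrite inner products
  have hiL : |⟪v, (‖q - p‖⁻¹ • (q - p) : E)⟫| = ‖q - p‖⁻¹ * |a * ⟪v, u⟫ + b * ⟪v, w⟫| := by
    rw [real_inner_smul_right, abs_mul, abs_of_pos (inv_pos.mpr hL0)]
    congr 1
    rw [hab, inner_add_right, real_inner_smul_right, real_inner_smul_right]
  have hiu : |⟪v, (‖u‖⁻¹ • u : E)⟫| = ‖u‖⁻¹ * |⟪v, u⟫| := by
    rw [real_inner_smul_right, abs_mul, abs_of_pos (inv_pos.mpr hu0)]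
  have hiw : |⟪v, (‖w‖⁻¹ • w : E)⟫| = ‖w‖⁻¹ * |⟪v, w⟫| := by
    rw [real_inner_smul_right, abs_mul, abs_of_pos (inv_pos.mpr hw0)]
  rw [hiL, hiu, hiw]
  -- reduce to the scalar estimate
  set SL := Real.sqrt ‖q - p‖ with hSLdef
  set Su := Real.sqrt ‖u‖ with hSudef
  set Sw := Real.sqrt ‖w‖ with hSwdef
  have eL : ‖q - p‖ = SL * SL := (Real.mul_self_sqrt hL0.le).symm
  have eu : ‖u‖ = Su * Su := (Real.mul_self_sqrt hu0.le).symm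
  have ew : ‖w‖ = Sw * Sw := (Real.mul_self_sqrt hw0.le).symm
  have hSL : 0 < SL := Real.sqrt_pos.mpr hL0
  have hSu : 0 < Su := Real.sqrt_pos.mpr hu0
  have hSw : 0 < Sw := Real.sqrt_pos.mpr hw0
  have hSs : 0 < Real.sqrt σ := Real.sqrt_pos.mpr hs
  have ha' : |a| * Real.sqrt σ * Su ≤ SL := by
    have e1 : |a| * Real.sqrt σ * Su = Real.sqrt (a ^ 2 * σ * ‖u‖) := by
      rw [hSudef]
      rw [Real.sqrt_mul (by positivity), Real.sqrt_mul (sq_nonneg a), Real.sqrt_sq_eq_abs]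
    rw [e1, hSLdef]
    apply Real.sqrt_le_sqrt
    rw [← sq_abs a]
    nlinarith [key1, mul_nonneg (sub_nonneg.mpr ha1)
      (mul_nonneg (mul_nonneg (abs_nonneg a) hs.le) (norm_nonneg u))]
  have hb' : |b| * Real.sqrt σ * Sw ≤ SL := by
    have e1 : |b| * Real.sqrt σ * Sw = Real.sqrt (b ^ 2 * σ * ‖w‖) := by
      rw [hSwdef]
      rw [Real.sqrt_mul (by positivity), Real.sqrt_mul (sq_nonneg b), Real.sqrt_sq_eq_abs]
    rw [e1, hSLdef]
    apply Real.sqrt_le_sqrt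
    rw [← sq_abs b]
    nlinarith [key2, mul_nonneg (sub_nonneg.mpr hb1)
      (mul_nonneg (mul_nonneg (abs_nonneg b) hs.le) (norm_nonneg w))]
  have hY : |a * ⟪v, u⟫ + b * ⟪v, w⟫| ≤ |a| * |⟪v, u⟫| + |b| * |⟪v, w⟫| := by
    calc |a * ⟪v, u⟫ + b * ⟪v, w⟫| ≤ |a * ⟪v, u⟫| + |b * ⟪v, w⟫| := abs_add_le _ _
      _ = |a| * |⟪v, u⟫| + |b| * |⟪v, w⟫| := by rw [abs_mul, abs_mul]
  have final := scalar_est SL Su Sw (Real.sqrt σ)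
    |⟪v, u⟫| |⟪v, w⟫| a b (|a * ⟪v, u⟫ + b * ⟪v, w⟫|)
    hSL hSu hSw hSs (abs_nonneg _) (abs_nonneg _) ha' hb' hY
  calc SL * (‖q - p‖⁻¹ * |a * ⟪v, u⟫ + b * ⟪v, w⟫|)
      = SL⁻¹ * |a * ⟪v, u⟫ + b * ⟪v, w⟫| := by
        rw [eL]
        field_simp
    _ ≤ (Real.sqrt σ)⁻¹ * (Su⁻¹ * |⟪v, u⟫| + Sw⁻¹ * |⟪v, w⟫|) := final
    _ = (Real.sqrt σ)⁻¹ * (Su * (‖u‖⁻¹ * |⟪v, u⟫|)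
          + Sw * (‖w‖⁻¹ * |⟪v, w⟫|)) := by
        rw [eu, ew]
        field_simp
end aux

lemma triangle_ne {A B C' : EuclideanSpace ℝ (Fin 2)}
    (h : AffineIndependent ℝ ![A, B, C']) : B ≠ A ∧ C' ≠ A := by
  constructor
  · have := h.injective.ne (show (1 : Fin 3) ≠ 0 by decide)
    simpa using this
  · have := h.injective.ne (show (2 : Fin 3) ≠ 0 by decide)
    simpa using this

lemma triangle_sin_pos {A B C' : EuclideanSpace ℝ (Fin 2)}
    (h : AffineIndependent ℝ ![A, B, C']) : 0 < Real.sin (∠ B A C') := by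
  apply EuclideanGeometry.sin_pos_of_not_collinear
  have := affineIndependent_iff_not_collinear_set.mp h
  rw [Set.insert_comm]
  exact this

/-- control of directional components along a segment by the two long
edges: let `T = conv{A,B,C'}` with the maximum angle at `A` and adjacent edges
`e₁ = AB`, `e₂ = AC'` (unit tangents `t₁, t₂`).  For a right triangle (`∠ at A = π/2`),
for every constant vector `v` and segment `e = [p,q] ⊆ T` with unit tangent `t_e`,
`‖v·t_e‖_{L²(e)} ≤ ‖v·t₁‖_{L²(e₁)} + ‖v·t₂‖_{L²(e₂)}`;
in general, with a universal constant `C`,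
`‖v·t_e‖_{L²(e)} ≤ C (sin θ_M)^{-1/2} (‖v·t₁‖_{L²(e₁)} + ‖v·t₂‖_{L²(e₂)})`
(here `‖v·t‖_{L²(e)} = |e|^{1/2} |v·t|`). -/
theorem stmt12 :
    ∃ C : ℝ, 0 < C ∧
    ((∀ A B C' : EuclideanSpace ℝ (Fin 2), AffineIndependent ℝ ![A, B, C'] →
        ∠ B A C' = π / 2 →
        ∀ p q : EuclideanSpace ℝ (Fin 2),
          p ∈ convexHull ℝ ({A, B, C'} : Set (EuclideanSpace ℝ (Fin 2))) →
          q ∈ convexHull ℝ ({A, B, C'} : Set (EuclideanSpace ℝ (Fin 2))) → p ≠ q →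
        ∀ v : EuclideanSpace ℝ (Fin 2),
          Real.sqrt (dist p q) * |⟪v, (‖q - p‖⁻¹ • (q - p) : EuclideanSpace ℝ (Fin 2))⟫|
            ≤ Real.sqrt (dist A B) * |⟪v, (‖B - A‖⁻¹ • (B - A) : EuclideanSpace ℝ (Fin 2))⟫|
              + Real.sqrt (dist A C') * |⟪v, (‖C' - A‖⁻¹ • (C' - A) : EuclideanSpace ℝ (Fin 2))⟫|) ∧
      (∀ A B C' : EuclideanSpace ℝ (Fin 2), AffineIndependent ℝ ![A, B, C'] →
        ∠ A B C' ≤ ∠ B A C' → ∠ A C' B ≤ ∠ B A C' →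
        ∀ p q : EuclideanSpace ℝ (Fin 2),
          p ∈ convexHull ℝ ({A, B, C'} : Set (EuclideanSpace ℝ (Fin 2))) →
          q ∈ convexHull ℝ ({A, B, C'} : Set (EuclideanSpace ℝ (Fin 2))) → p ≠ q →
        ∀ v : EuclideanSpace ℝ (Fin 2),
          Real.sqrt (dist p q) * |⟪v, (‖q - p‖⁻¹ • (q - p) : EuclideanSpace ℝ (Fin 2))⟫|
            ≤ C * (Real.sqrt (Real.sin (∠ B A C')))⁻¹ *
              (Real.sqrt (dist A B) * |⟪v, (‖B - A‖⁻¹ • (B - A) : EuclideanSpace ℝ (Fin 2))⟫|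
                + Real.sqrt (dist A C') * |⟪v, (‖C' - A‖⁻¹ • (C' - A) : EuclideanSpace ℝ (Fin 2))⟫|))) := by
  refine ⟨1, one_pos, ?_, ?_⟩
  · intro A B C' h hR p q hp hq hpq v
    obtain ⟨hBA, hCA⟩ := triangle_ne h
    have := main_est A B C' hBA hCA (triangle_sin_pos h) p q hp hq hpq v
    rw [hR, Real.sin_pi_div_two, Real.sqrt_one, inv_one, one_mul] at this
    exact this
  · intro A B C' h _ _ p q hp hq hpq v
    obtain ⟨hBA, hCA⟩ := triangle_ne h
    rw [one_mul]
    exact main_est A B C' hBA hCA (triangle_sin_pos h) p q hp hq hpq v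
end
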